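/- arXiv:2201.07407 — 4 statements merged into one kernel-verified Lean document; each statement's English description precedes it below -/
import Mathlib

section
/- Let r > 0, λ ≥ 0, and let X be a random variable with density f_{r,λ} (i.e. X ~ χ²_r(λ)). Then the sixth central moment of X satisfies 𝔼[(X − (r+λ))⁶] = 40( 3r³ + 2r²(26 + 9λ) + 12r(8 + 26λ + 3λ²) + 24λ(24 + 18λ + λ²) ). -/
open Real MeasureTheory Set Filter

/-- The noncentral chi-square density with `r` degrees of freedom and
noncentrality parameter `lam` (set to `0` for `x ≤ 0`). -/
noncomputable def chiSqPDF (r lam x : ℝ) : ℝ :=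
  if 0 < x then
    (x / 2) ^ (r / 2 - 1) / (2 * Real.exp ((x + lam) / 2)) *
      ∑' j : ℕ, (lam * x / 4) ^ j / ((j.factorial : ℝ) * Real.Gamma (r / 2 + (j : ℝ)))
  else 0

/-- `δ_x = (x − (r+λ)) / √(2(r+2λ))`. -/
noncomputable def stdDelta (r lam x : ℝ) : ℝ :=
  (x - (r + lam)) / Real.sqrt (2 * (r + 2 * lam))

/-- The standard normal density. -/
noncomputable def stdPhi (z : ℝ) : ℝ :=
  Real.exp (-z ^ 2 / 2) / Real.sqrt (2 * Real.pi)

/-- The standard normal survival function. -/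
noncomputable def stdPsi (z : ℝ) : ℝ := ∫ y in Set.Ioi z, stdPhi y

/-- The survival function of the noncentral chi-square distribution. -/
noncomputable def chiSqSurv (r lam a : ℝ) : ℝ := ∫ x in Set.Ioi a, chiSqPDF r lam x

/-- `D_{r,λ} = (r+λ)/√(2(r+2λ))`. -/
noncomputable def Drl (r lam : ℝ) : ℝ := (r + lam) / Real.sqrt (2 * (r + 2 * lam))

/-- The bulk `B_{r,λ}(η)` of the noncentral chi-square distribution. -/
noncomputable def bulk (r lam eta : ℝ) : Set ℝ :=
  {x : ℝ | 0 < x ∧ |stdDelta r lam x / Drl r lam| ≤ eta * r ^ (-(1:ℝ)/3)}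

lemma aux_exp_tsum (t : ℝ) : ∑' n : ℕ, t ^ n / n.factorial = Real.exp t := by
  rw [Real.exp_eq_exp_ℝ, NormedSpace.exp_eq_tsum_div]

lemma aux_prod_shift (m : ℕ) : ∀ i : ℕ,
    (∏ k ∈ Finset.range m, (((i : ℝ) + m) - k)) * (Nat.factorial i : ℝ)
      = (Nat.factorial (i + m) : ℝ) := by
  induction m with
  | zero => intro i; simp
  | succ m ih =>
    intro i
    rw [Finset.prod_range_succ']
    have h1 : ∀ k : ℕ, ((i : ℝ) + (m + 1 : ℕ)) - ((k : ℕ) + 1 : ℕ) = ((i : ℝ) + m) - k := by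
      intro k; push_cast; ring
    simp only [h1, Nat.cast_zero, sub_zero]
    have : i + (m + 1) = (i + m) + 1 := by ring
    rw [this, Nat.factorial_succ]
    push_cast
    rw [show ((∏ k ∈ Finset.range m, ((i : ℝ) + ↑m - ↑k)) * ((i:ℝ) + (↑m + 1))) * ↑(Nat.factorial i)
        = ((∏ k ∈ Finset.range m, ((i : ℝ) + ↑m - ↑k)) * ↑(Nat.factorial i)) * ((i:ℝ) + ↑m + 1) by ring,
      ih i]
    ring

lemma aux_poisson (t : ℝ) (m : ℕ) :
    Summable (fun j : ℕ => t ^ j * (∏ k ∈ Finset.range m, ((j : ℝ) - k)) / j.factorial)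
  ∧ ∑' j : ℕ, t ^ j * (∏ k ∈ Finset.range m, ((j : ℝ) - k)) / j.factorial
      = t ^ m * Real.exp t := by
  set f : ℕ → ℝ := fun j => t ^ j * (∏ k ∈ Finset.range m, ((j : ℝ) - k)) / j.factorial with hf
  have hkey : ∀ i : ℕ, f (i + m) = t ^ m * (t ^ i / i.factorial) := by
    intro i
    have hp := aux_prod_shift m i
    have hfac : (Nat.factorial i : ℝ) ≠ 0 := Nat.cast_ne_zero.2 (Nat.factorial_ne_zero i)
    have hfac2 : (Nat.factorial (i + m) : ℝ) ≠ 0 := Nat.cast_ne_zero.2 (Nat.factorial_ne_zero _)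
    have hprod : (∏ k ∈ Finset.range m, (((i + m : ℕ) : ℝ) - k))
        = (Nat.factorial (i + m) : ℝ) / (Nat.factorial i : ℝ) := by
      push_cast at hp ⊢
      rw [eq_div_iff hfac]
      exact hp
    simp only [hf]
    rw [hprod, pow_add]
    field_simp
  have hsum2 : Summable (fun i => f (i + m)) :=
    ((Real.summable_pow_div_factorial t).mul_left (t ^ m)).congr (fun i => (hkey i).symm)
  have hsum : Summable f := (summable_nat_add_iff m).1 hsum2
  refine ⟨hsum, ?_⟩
  have hz : ∀ j ∈ Finset.range m, f j = 0 := by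
    intro j hj
    have : (∏ k ∈ Finset.range m, ((j : ℝ) - k)) = 0 :=
      Finset.prod_eq_zero hj (sub_self _)
    simp [hf, this]
  calc ∑' j, f j = ∑ j ∈ Finset.range m, f j + ∑' i, f (i + m) :=
        (Summable.sum_add_tsum_nat_add m hsum).symm
    _ = t ^ m * Real.exp t := by
        rw [Finset.sum_eq_zero hz, tsum_congr hkey, tsum_mul_left, aux_exp_tsum, zero_add]

lemma aux_integrable {c : ℝ} (hc : 0 < c) :
    IntegrableOn (fun x : ℝ => x ^ (c - 1) * Real.exp (-(1/2) * x)) (Ioi 0) := by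
  have h := integrableOn_rpow_mul_exp_neg_mul_rpow (p := 1) (s := c - 1) (b := 1/2)
    (by linarith) one_pos (by norm_num)
  simpa [Real.rpow_one] using h

lemma aux_integral {c : ℝ} (hc : 0 < c) :
    ∫ x in Ioi (0:ℝ), x ^ (c - 1) * Real.exp (-(1/2) * x) = 2 ^ c * Real.Gamma c := by
  have h := integral_rpow_mul_exp_neg_mul_rpow (p := 1) (q := c - 1) (b := 1/2)
    one_pos (by linarith) (by norm_num)
  simp only [Real.rpow_one] at h
  rw [h]
  have h2 : ((1:ℝ)/2) ^ (-(c - 1 + 1) / 1) = 2 ^ c := by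
    rw [one_div, show (-(c - 1 + 1) / 1) = -c by ring, Real.inv_rpow (by norm_num),
      Real.rpow_neg (by norm_num), inv_inv]
  rw [h2, show (c - 1 + 1) / 1 = c by ring]
  ring

lemma aux_mom {c : ℝ} (hc : 0 < c) (k : ℕ) :
    IntegrableOn (fun x : ℝ => x ^ k * (x ^ (c - 1) * Real.exp (-(1/2) * x))) (Ioi 0)
  ∧ ∫ x in Ioi (0:ℝ), x ^ k * (x ^ (c - 1) * Real.exp (-(1/2) * x))
      = 2 ^ (c + k) * Real.Gamma (c + k) := by
  have hck : (0:ℝ) < c + k := by positivity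
  have hcong : ∀ x ∈ Ioi (0:ℝ),
      x ^ (c + k - 1) * Real.exp (-(1/2) * x)
        = x ^ k * (x ^ (c - 1) * Real.exp (-(1/2) * x)) := by
    intro x hx
    have hx0 : (0:ℝ) < x := hx
    rw [show c + (k:ℝ) - 1 = (c - 1) + (k:ℝ) by ring, Real.rpow_add hx0, Real.rpow_natCast]
    ring
  constructor
  · exact (aux_integrable hck).congr_fun hcong measurableSet_Ioi
  · rw [← setIntegral_congr_fun measurableSet_Ioi hcong, aux_integral hck]

lemma aux_gamma_prod {c : ℝ} (hc : 0 < c) (k : ℕ) :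
    Real.Gamma (c + k) = Real.Gamma c * ∏ i ∈ Finset.range k, (c + i) := by
  induction k with
  | zero => simp
  | succ k ih =>
    have h : c + ((k:ℕ) + 1 : ℕ) = (c + k) + 1 := by push_cast; ring
    have hck : (0:ℝ) < c + k := by positivity
    rw [h, Real.Gamma_add_one hck.ne', ih, Finset.prod_range_succ]
    ring

lemma aux_I6 (μ : ℝ) {c : ℝ} (hc : 0 < c) :
    IntegrableOn (fun x : ℝ => (x - μ) ^ 6 * (x ^ (c - 1) * Real.exp (-(1/2) * x))) (Ioi 0)
  ∧ ∫ x in Ioi (0:ℝ), (x - μ) ^ 6 * (x ^ (c - 1) * Real.exp (-(1/2) * x))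
      = 2 ^ c * Real.Gamma c *
        (μ^6 - 12*μ^5*c + 60*μ^4*(c*(c+1)) - 160*μ^3*(c*(c+1)*(c+2))
          + 240*μ^2*(c*(c+1)*(c+2)*(c+3)) - 192*μ*(c*(c+1)*(c+2)*(c+3)*(c+4))
          + 64*(c*(c+1)*(c+2)*(c+3)*(c+4)*(c+5))) := by
  set b : ℕ → ℝ := fun k => (Nat.choose 6 k : ℝ) * (-μ)^(6-k) with hb
  have hpt : ∀ x : ℝ, (x - μ)^6 * (x ^ (c-1) * Real.exp (-(1/2)*x))
      = ∑ k ∈ Finset.range 7, b k * (x ^ k * (x ^ (c-1) * Real.exp (-(1/2)*x))) := by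
    intro x
    simp only [hb, Finset.sum_range_succ, Finset.sum_range_zero]
    norm_num [Nat.choose]
    ring
  have hint : ∀ k ∈ Finset.range 7,
      IntegrableOn (fun x : ℝ => b k * (x ^ k * (x ^ (c-1) * Real.exp (-(1/2)*x)))) (Ioi 0) :=
    fun k _ => ((aux_mom hc k).1.const_mul _)
  constructor
  · have h := MeasureTheory.integrable_finset_sum (μ := volume.restrict (Ioi 0))
      (Finset.range 7) hint
    exact h.congr (Filter.Eventually.of_forall fun x => (hpt x).symm)
  · rw [setIntegral_congr_fun measurableSet_Ioi (fun x _ => hpt x),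
      integral_finset_sum _ hint]
    have hval : ∀ k : ℕ, (∫ x in Ioi (0:ℝ), x ^ k * (x ^ (c-1) * Real.exp (-(1/2)*x)))
        = 2 ^ c * (2:ℝ) ^ k * (Real.Gamma c * ∏ i ∈ Finset.range k, (c + i)) := by
      intro k
      rw [(aux_mom hc k).2, aux_gamma_prod hc k, Real.rpow_add two_pos, Real.rpow_natCast]
    simp_rw [integral_const_mul, hval]
    simp only [hb, Finset.sum_range_succ, Finset.sum_range_zero, Finset.prod_range_succ,
      Finset.prod_range_zero]
    norm_num [Nat.choose]
    ring

set_option maxHeartbeats 2000000 in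
/-- Sixth central moment of the noncentral chi-square distribution. -/
theorem chiSq_sixthCentralMoment (r lam : ℝ) (hr : 0 < r) (hlam : 0 ≤ lam) :
    ∫ x : ℝ, (x - (r + lam)) ^ 6 * chiSqPDF r lam x
      = 40 * (3 * r ^ 3 + 2 * r ^ 2 * (26 + 9 * lam)
          + 12 * r * (8 + 26 * lam + 3 * lam ^ 2)
          + 24 * lam * (24 + 18 * lam + lam ^ 2)) := by
  have hcj : ∀ j : ℕ, (0:ℝ) < r/2 + j := fun j => by positivity
  have hΓ : ∀ j : ℕ, 0 < Real.Gamma (r/2 + j) := fun j => Real.Gamma_pos_of_pos (hcj j)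
  have hfac : ∀ j : ℕ, (0:ℝ) < (j.factorial : ℝ) :=
    fun j => by exact_mod_cast j.factorial_pos
  set K : ℕ → ℝ := fun j => (2:ℝ) ^ (-(r/2)) * Real.exp (-(lam/2)) * (lam/4)^j /
      ((j.factorial : ℝ) * Real.Gamma (r/2 + j)) with hK
  have hKnn : ∀ j : ℕ, 0 ≤ K j := by
    intro j
    apply div_nonneg _ (mul_nonneg (hfac j).le (hΓ j).le)
    have h4 : (0:ℝ) ≤ (lam/4)^j := pow_nonneg (by linarith) j
    positivity
  set A : ℕ → ℝ := fun j => (r+lam)^6 - 12*(r+lam)^5*(r/2+(j:ℝ))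
      + 60*(r+lam)^4*((r/2+(j:ℝ))*((r/2+(j:ℝ))+1))
      - 160*(r+lam)^3*((r/2+(j:ℝ))*((r/2+(j:ℝ))+1)*((r/2+(j:ℝ))+2))
      + 240*(r+lam)^2*((r/2+(j:ℝ))*((r/2+(j:ℝ))+1)*((r/2+(j:ℝ))+2)*((r/2+(j:ℝ))+3))
      - 192*(r+lam)*((r/2+(j:ℝ))*((r/2+(j:ℝ))+1)*((r/2+(j:ℝ))+2)*((r/2+(j:ℝ))+3)*((r/2+(j:ℝ))+4))
      + 64*((r/2+(j:ℝ))*((r/2+(j:ℝ))+1)*((r/2+(j:ℝ))+2)*((r/2+(j:ℝ))+3)*((r/2+(j:ℝ))+4)*((r/2+(j:ℝ))+5)) with hA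
  set F : ℕ → ℝ → ℝ := fun j x =>
      ((x - (r+lam))^6 * (x ^ (r/2 + (j:ℝ) - 1) * Real.exp (-(1/2) * x))) * K j with hF
  have hFint : ∀ j : ℕ, Integrable (F j) (volume.restrict (Ioi 0)) :=
    fun j => ((aux_I6 (r+lam) (hcj j)).1).mul_const (K j)
  have hIval : ∀ j : ℕ, ∫ x in Ioi (0:ℝ), F j x
      = Real.exp (-(lam/2)) * ((lam/2)^j / (j.factorial : ℝ) * A j) := by
    intro j
    have h1 : ∫ x in Ioi (0:ℝ), F j x
        = (∫ x in Ioi (0:ℝ), (x - (r+lam))^6 * (x ^ (r/2 + (j:ℝ) - 1) * Real.exp (-(1/2) * x))) * K j := by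
      simp only [hF]
      rw [integral_mul_const]
    rw [h1, (aux_I6 (r+lam) (hcj j)).2]
    have e2 : (2:ℝ) ^ (r/2 + (j:ℝ)) = 2 ^ (r/2) * (2:ℝ)^(j:ℕ) := by
      rw [Real.rpow_add two_pos, Real.rpow_natCast]
    have e2' : (2:ℝ) ^ (-(r/2)) * (2:ℝ) ^ (r/2) = 1 := by
      rw [← Real.rpow_add two_pos]
      simp
    have e4 : (2:ℝ)^(j:ℕ) * (lam/4)^j = (lam/2)^j := by
      rw [← mul_pow, show (2:ℝ)*(lam/4) = lam/2 by ring]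
    have hΓne := (hΓ j).ne'
    have hfne := (hfac j).ne'
    have eK : (2:ℝ)^(r/2+(j:ℝ)) * Real.Gamma (r/2+(j:ℝ)) * K j
        = Real.exp (-(lam/2)) * ((lam/2)^j / (j.factorial : ℝ)) := by
      calc (2:ℝ)^(r/2+(j:ℝ)) * Real.Gamma (r/2+(j:ℝ)) * K j
          = ((2:ℝ)^(-(r/2)) * (2:ℝ)^(r/2)) * (((2:ℝ)^j * (lam/4)^j)
              * (Real.exp (-(lam/2)) / (j.factorial:ℝ)))
              * (Real.Gamma (r/2+(j:ℝ)) / Real.Gamma (r/2+(j:ℝ))) := by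
            simp only [hK]
            rw [e2]
            ring
        _ = Real.exp (-(lam/2)) * ((lam/2)^j / (j.factorial:ℝ)) := by
            rw [e2', e4, div_self hΓne]
            ring
    calc (2:ℝ)^(r/2+(j:ℝ)) * Real.Gamma (r/2+(j:ℝ)) *
          ((r + lam) ^ 6 - 12 * (r + lam) ^ 5 * (r / 2 + ↑j) + 60 * (r + lam) ^ 4 * ((r / 2 + ↑j) * (r / 2 + ↑j + 1)) -
            160 * (r + lam) ^ 3 * ((r / 2 + ↑j) * (r / 2 + ↑j + 1) * (r / 2 + ↑j + 2)) +
          240 * (r + lam) ^ 2 * ((r / 2 + ↑j) * (r / 2 + ↑j + 1) * (r / 2 + ↑j + 2) * (r / 2 + ↑j + 3)) -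
        192 * (r + lam) * ((r / 2 + ↑j) * (r / 2 + ↑j + 1) * (r / 2 + ↑j + 2) * (r / 2 + ↑j + 3) * (r / 2 + ↑j + 4)) +
      64 * ((r / 2 + ↑j) * (r / 2 + ↑j + 1) * (r / 2 + ↑j + 2) * (r / 2 + ↑j + 3) * (r / 2 + ↑j + 4) * (r / 2 + ↑j + 5))) * K j
        = ((2:ℝ)^(r/2+(j:ℝ)) * Real.Gamma (r/2+(j:ℝ)) * K j) * A j := by rw [hA]; ring
      _ = (Real.exp (-(lam/2)) * ((lam/2)^j / (j.factorial : ℝ))) * A j := by rw [eK]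
      _ = Real.exp (-(lam/2)) * ((lam/2)^j / (j.factorial : ℝ) * A j) := by ring
  set g : ℕ → ℕ → ℝ := fun m j => (lam/2)^j * (∏ k ∈ Finset.range m, ((j : ℝ) - k)) / j.factorial
    with hg
  have hgs : ∀ m, Summable (g m) := fun m => (aux_poisson (lam/2) m).1
  have hgv : ∀ m, ∑' j, g m j = (lam/2)^m * Real.exp (lam/2) := fun m => (aux_poisson (lam/2) m).2
  set C0 : ℝ := lam^6 + 3840*r - 2304*r*lam + 720*r*lam^2 - 160*r*lam^3 + 30*r*lam^4 + 2080*r^2 - 960*r^2*lam + 180*r^2*lam^2 + 120*r^3 with hC0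
  set C1 : ℝ := 46080 - 23040*lam + 5760*lam^2 - 960*lam^3 + 120*lam^4 - 12*lam^5 + 29568*r - 12480*r*lam + 2400*r*lam^2 - 240*r*lam^3 + 3360*r^2 - 720*r^2*lam with hC1
  set C2 : ℝ := 115200 - 46080*lam + 8640*lam^2 - 960*lam^3 + 60*lam^4 + 27840*r - 7680*r*lam + 720*r*lam^2 + 720*r^2 with hC2
  set C3 : ℝ := 76800 - 23040*lam + 2880*lam^2 - 160*lam^3 + 7040*r - 960*r*lam with hC3
  set C4 : ℝ := 19200 - 3840*lam + 240*lam^2 + 480*r with hC4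
  set C5 : ℝ := 1920 - 192*lam with hC5
  set C6 : ℝ := (64:ℝ) with hC6
  have hAg : ∀ j : ℕ, (lam/2)^j / (j.factorial : ℝ) * A j = C0 * g 0 j + (C1 * g 1 j + (C2 * g 2 j + (C3 * g 3 j + (C4 * g 4 j + (C5 * g 5 j + C6 * g 6 j))))) := by
    intro j
    simp only [hA, hg, hC0, hC1, hC2, hC3, hC4, hC5, hC6, Finset.prod_range_succ,
      Finset.prod_range_zero]
    ring
  have hS : Summable (fun j : ℕ => C0 * g 0 j + (C1 * g 1 j + (C2 * g 2 j + (C3 * g 3 j + (C4 * g 4 j + (C5 * g 5 j + C6 * g 6 j)))))) :=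
    ((hgs 0).mul_left _).add (((hgs 1).mul_left _).add (((hgs 2).mul_left _).add
      (((hgs 3).mul_left _).add (((hgs 4).mul_left _).add (((hgs 5).mul_left _).add
      ((hgs 6).mul_left _))))))
  have htsum : ∑' j : ℕ, (C0 * g 0 j + (C1 * g 1 j + (C2 * g 2 j + (C3 * g 3 j + (C4 * g 4 j + (C5 * g 5 j + C6 * g 6 j)))))) = C0 * ((lam/2)^0 * Real.exp (lam/2)) + (C1 * ((lam/2)^1 * Real.exp (lam/2)) + (C2 * ((lam/2)^2 * Real.exp (lam/2)) + (C3 * ((lam/2)^3 * Real.exp (lam/2)) + (C4 * ((lam/2)^4 * Real.exp (lam/2)) + (C5 * ((lam/2)^5 * Real.exp (lam/2)) + C6 * ((lam/2)^6 * Real.exp (lam/2))))))) := by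
    rw [Summable.tsum_add ((hgs 0).mul_left _) (((hgs 1).mul_left _).add (((hgs 2).mul_left _).add
        (((hgs 3).mul_left _).add (((hgs 4).mul_left _).add (((hgs 5).mul_left _).add
        ((hgs 6).mul_left _)))))),
      Summable.tsum_add ((hgs 1).mul_left _) (((hgs 2).mul_left _).add (((hgs 3).mul_left _).add
        (((hgs 4).mul_left _).add (((hgs 5).mul_left _).add ((hgs 6).mul_left _))))),
      Summable.tsum_add ((hgs 2).mul_left _) (((hgs 3).mul_left _).add (((hgs 4).mul_left _).add
        (((hgs 5).mul_left _).add ((hgs 6).mul_left _)))),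
      Summable.tsum_add ((hgs 3).mul_left _) (((hgs 4).mul_left _).add (((hgs 5).mul_left _).add
        ((hgs 6).mul_left _))),
      Summable.tsum_add ((hgs 4).mul_left _) (((hgs 5).mul_left _).add ((hgs 6).mul_left _)),
      Summable.tsum_add ((hgs 5).mul_left _) ((hgs 6).mul_left _),
      tsum_mul_left, tsum_mul_left, tsum_mul_left, tsum_mul_left, tsum_mul_left,
      tsum_mul_left, tsum_mul_left, hgv 0, hgv 1, hgv 2, hgv 3, hgv 4, hgv 5, hgv 6]
  have hnorm : ∀ j : ℕ, ∫ x in Ioi (0:ℝ), ‖F j x‖ = ∫ x in Ioi (0:ℝ), F j x := by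
    intro j
    refine setIntegral_congr_fun measurableSet_Ioi (fun x hx => ?_)
    have hx0 : (0:ℝ) < x := hx
    refine Real.norm_of_nonneg ?_
    simp only [hF]
    have h6 : (0:ℝ) ≤ (x - (r+lam))^6 := by positivity
    exact mul_nonneg (mul_nonneg h6 (mul_nonneg (Real.rpow_nonneg hx0.le _)
      (Real.exp_pos _).le)) (hKnn j)
  have hsummable : Summable (fun j : ℕ => ∫ x in Ioi (0:ℝ), ‖F j x‖) := by
    have h1 : Summable (fun j : ℕ => Real.exp (-(lam/2)) * ((lam/2)^j / (j.factorial : ℝ) * A j)) := by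
      apply Summable.mul_left
      exact hS.congr (fun j => (hAg j).symm)
    exact h1.congr (fun j => ((hnorm j).trans (hIval j)).symm)
  have hpw : ∀ x ∈ Ioi (0:ℝ), (x - (r+lam))^6 * chiSqPDF r lam x = ∑' j : ℕ, F j x := by
    intro x hx
    have hx0 : (0:ℝ) < x := hx
    rw [chiSqPDF, if_pos hx0]
    have hterm : ∀ j : ℕ, F j x = ((x - (r+lam))^6 * ((x/2)^(r/2-1)/(2 * Real.exp ((x+lam)/2))))
        * ((lam*x/4)^j / ((j.factorial : ℝ) * Real.Gamma (r/2 + (j:ℝ)))) := by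
      intro j
      simp only [hF, hK]
      have f1 : x ^ (r/2 + (j:ℝ) - 1) = x ^ (r/2-1) * x^(j:ℕ) := by
        rw [show r/2 + (j:ℝ) - 1 = (r/2-1) + (j:ℝ) by ring, Real.rpow_add hx0, Real.rpow_natCast]
      have f2 : (x/2)^(r/2-1) = x^(r/2-1) / (2:ℝ)^(r/2-1) := Real.div_rpow hx0.le (by norm_num : (0:ℝ) ≤ 2) (r/2-1)
      have f3 : Real.exp ((x+lam)/2) = Real.exp ((1/2)*x) * Real.exp (lam/2) := by
        rw [← Real.exp_add]; ring_nf
      have f4 : Real.exp (-(1/2)*x) * Real.exp ((1/2)*x) = 1 := by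
        rw [← Real.exp_add, show -(1/2)*x + (1/2)*x = (0:ℝ) by ring, Real.exp_zero]
      have f5 : Real.exp (-(lam/2)) * Real.exp (lam/2) = 1 := by
        rw [← Real.exp_add, show -(lam/2) + lam/2 = (0:ℝ) by ring, Real.exp_zero]
      have f6 : (lam*x/4)^j = (lam/4)^j * x^j := by
        rw [show lam*x/4 = lam/4*x by ring, mul_pow]
      have f7 : (2:ℝ)^(-(r/2)) * (2:ℝ)^(r/2-1) * 2 = 1 := by
        rw [← Real.rpow_add two_pos, show -(r/2)+(r/2-1) = (-1:ℝ) by ring, Real.rpow_neg_one]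
        norm_num
      have key : Real.exp (-(1/2)*x) * (2:ℝ)^(-(r/2)) * Real.exp (-(lam/2))
          = 1 / ((2:ℝ)^(r/2-1) * (2 * (Real.exp ((1/2)*x) * Real.exp (lam/2)))) := by
        rw [eq_div_iff (by positivity)]
        calc Real.exp (-(1/2)*x) * (2:ℝ)^(-(r/2)) * Real.exp (-(lam/2))
              * ((2:ℝ)^(r/2-1) * (2 * (Real.exp ((1/2)*x) * Real.exp (lam/2))))
            = (Real.exp (-(1/2)*x) * Real.exp ((1/2)*x))
                * (Real.exp (-(lam/2)) * Real.exp (lam/2))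
                * ((2:ℝ)^(-(r/2)) * (2:ℝ)^(r/2-1) * 2) := by ring
          _ = 1 := by rw [f4, f5, f7]; norm_num
      rw [f1, f2, f3, f6]
      linear_combination ((x - (r+lam))^6 * (x^(r/2-1) * x^(j:ℕ) * (lam/4)^j /
        ((j.factorial:ℝ) * Real.Gamma (r/2+(j:ℝ))))) * key
    rw [tsum_congr hterm, tsum_mul_left]
    ring
  have hE : Real.exp (-(lam/2)) * Real.exp (lam/2) = 1 := by
    rw [← Real.exp_add, show -(lam/2) + lam/2 = (0:ℝ) by ring, Real.exp_zero]
  calc ∫ x : ℝ, (x - (r + lam)) ^ 6 * chiSqPDF r lam x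
      = ∫ x in Ioi (0:ℝ), (x - (r + lam)) ^ 6 * chiSqPDF r lam x := by
        rw [← integral_indicator measurableSet_Ioi]
        congr 1
        funext x
        by_cases hx : 0 < x
        · rw [Set.indicator_of_mem (mem_Ioi.2 hx)]
        · rw [Set.indicator_of_notMem (by simpa using hx), chiSqPDF, if_neg hx, mul_zero]
    _ = ∫ x in Ioi (0:ℝ), ∑' j : ℕ, F j x :=
        setIntegral_congr_fun measurableSet_Ioi (fun x hx => hpw x hx)
    _ = ∑' j : ℕ, ∫ x in Ioi (0:ℝ), F j x :=
        (integral_tsum_of_summable_integral_norm hFint hsummable).symm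
    _ = ∑' j : ℕ, Real.exp (-(lam/2)) * ((lam/2)^j / (j.factorial : ℝ) * A j) :=
        tsum_congr hIval
    _ = Real.exp (-(lam/2)) * ∑' j : ℕ, ((lam/2)^j / (j.factorial : ℝ) * A j) := tsum_mul_left
    _ = Real.exp (-(lam/2)) * (C0 * ((lam/2)^0 * Real.exp (lam/2)) + (C1 * ((lam/2)^1 * Real.exp (lam/2)) + (C2 * ((lam/2)^2 * Real.exp (lam/2)) + (C3 * ((lam/2)^3 * Real.exp (lam/2)) + (C4 * ((lam/2)^4 * Real.exp (lam/2)) + (C5 * ((lam/2)^5 * Real.exp (lam/2)) + C6 * ((lam/2)^6 * Real.exp (lam/2)))))))) := by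
        rw [tsum_congr hAg, htsum]
    _ = 40 * (3 * r ^ 3 + 2 * r ^ 2 * (26 + 9 * lam)
          + 12 * r * (8 + 26 * lam + 3 * lam ^ 2)
          + 24 * lam * (24 + 18 * lam + lam ^ 2)) := by
        simp only [hC0, hC1, hC2, hC3, hC4, hC5, hC6]
        linear_combination (40 * (3 * r ^ 3 + 2 * r ^ 2 * (26 + 9 * lam)
          + 12 * r * (8 + 26 * lam + 3 * lam ^ 2)
          + 24 * lam * (24 + 18 * lam + lam ^ 2))) * hE
end

section
/- Let r > 0, 0 ≤ λ ≤ r, let X be a random variable with density f_{r,λ} (i.e. X ~ χ²_r(λ)), and let A ⊆ ℝ be a Borel set. Then | 𝔼[(X − (r+λ)) · 1_{X ∈ A}] | ≤ 6^{1/2} r^{1/2} ( ℙ(X ∈ Aᶜ) )^{1/2}. -/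
open Real MeasureTheory Set Filter

lemma measurable_tsum_nonneg {F : ℕ → ℝ → ℝ} (hm : ∀ j, Measurable (F j))
    (h0 : ∀ j x, 0 ≤ F j x) : Measurable fun x => ∑' j, F j x := by
  have h : (fun x => ∑' j, F j x)
      = fun x => ((∑' j, Real.toNNReal (F j x) : NNReal) : ℝ) := by
    ext x
    rw [NNReal.coe_tsum]
    exact tsum_congr fun j => (Real.coe_toNNReal _ (h0 j x)).symm
  rw [h]
  exact (Measurable.nnreal_tsum fun j => (hm j).real_toNNReal).coe_nnreal_real

lemma integrable_tsum_nonneg {μ : Measure ℝ} {F : ℕ → ℝ → ℝ}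
    (hint : ∀ i, Integrable (F i) μ) (h0 : ∀ i, 0 ≤ᵐ[μ] F i)
    (hs : Summable fun i => ∫ x, F i x ∂μ) :
    Integrable (fun x => ∑' i, F i x) μ := by
  have hnn : ∀ i, ∫⁻ a, (‖F i a‖₊ : ENNReal) ∂μ = ENNReal.ofReal (∫ x, F i x ∂μ) := by
    intro i
    rw [ofReal_integral_eq_lintegral_ofReal (hint i) (h0 i)]
    refine lintegral_congr_ae ?_
    filter_upwards [h0 i] with x hx
    rw [← ENNReal.ofReal_coe_nnreal, coe_nnnorm, Real.norm_of_nonneg hx]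
  have key : ∑' i, ∫⁻ a, (‖F i a‖₊ : ENNReal) ∂μ ≠ ⊤ := by
    simp_rw [hnn]
    rw [← ENNReal.ofReal_tsum_of_nonneg (fun i => integral_nonneg_of_ae (h0 i)) hs]
    exact ENNReal.ofReal_ne_top
  have hae : ∀ᵐ x ∂μ, ∀ i, 0 ≤ F i x := ae_all_iff.2 h0
  constructor
  · have hG : (fun x => ∑' i, F i x) =ᵐ[μ]
        fun x => ((∑' i, ‖F i x‖₊ : NNReal) : ℝ) := by
      filter_upwards [hae] with x hx
      rw [NNReal.coe_tsum]
      refine tsum_congr fun i => ?_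
      rw [coe_nnnorm, Real.norm_of_nonneg (hx i)]
    refine AEStronglyMeasurable.congr ?_ hG.symm
    refine (AEMeasurable.coe_nnreal_real ?_).aestronglyMeasurable
    exact AEMeasurable.nnreal_tsum fun i => (hint i).aestronglyMeasurable.nnnorm.aemeasurable
  · show (∫⁻ x, (‖∑' i, F i x‖₊ : ENNReal) ∂μ) < ⊤
    calc ∫⁻ x, (‖∑' i, F i x‖₊ : ENNReal) ∂μ
        ≤ ∫⁻ x, ∑' i, (‖F i x‖₊ : ENNReal) ∂μ := by
          refine lintegral_mono_ae ?_
          filter_upwards [hae] with x hx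
          by_cases hsx : Summable fun i => F i x
          · calc (‖∑' i, F i x‖₊ : ENNReal)
                = ENNReal.ofReal (∑' i, F i x) := by
                  rw [← ENNReal.ofReal_coe_nnreal, coe_nnnorm,
                    Real.norm_of_nonneg (tsum_nonneg fun i => hx i)]
              _ = ∑' i, ENNReal.ofReal (F i x) :=
                  ENNReal.ofReal_tsum_of_nonneg hx hsx
              _ = ∑' i, (‖F i x‖₊ : ENNReal) := by
                  refine tsum_congr fun i => ?_
                  rw [← ENNReal.ofReal_coe_nnreal, coe_nnnorm, Real.norm_of_nonneg (hx i)]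
              _ ≤ ∑' i, (‖F i x‖₊ : ENNReal) := le_rfl
          · rw [tsum_eq_zero_of_not_summable hsx]
            simp
      _ = ∑' i, ∫⁻ x, (‖F i x‖₊ : ENNReal) ∂μ :=
          lintegral_tsum fun i =>
            (hint i).aestronglyMeasurable.nnnorm.aemeasurable.coe_nnreal_ennreal
      _ < ⊤ := key.lt_top

noncomputable def ccc (r lam : ℝ) (j : ℕ) : ℝ :=
  Real.exp (-(lam / 2)) * (lam / 2) ^ j /
    ((j.factorial : ℝ) * Real.Gamma (r / 2 + j) * (2 : ℝ) ^ (r / 2) * 2 ^ j)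

noncomputable def ggg (r : ℝ) (j : ℕ) (x : ℝ) : ℝ :=
  x ^ (r / 2 + j - 1) * Real.exp (-(2⁻¹ * x))

lemma chiSqPDF_series {r lam x : ℝ} (hr : 0 < r) (hx : 0 < x) :
    chiSqPDF r lam x = ∑' j, ccc r lam j * ggg r j x := by
  rw [chiSqPDF, if_pos hx, ← tsum_mul_left]
  refine tsum_congr fun j => ?_
  have hΓ : 0 < Real.Gamma (r / 2 + j) := Real.Gamma_pos_of_pos (by positivity)
  have h2r : (0 : ℝ) < (2 : ℝ) ^ (r / 2 : ℝ) := Real.rpow_pos_of_pos two_pos _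
  have hfac : (0 : ℝ) < (j.factorial : ℝ) := by positivity
  have e1 : (x / 2 : ℝ) ^ (r / 2 - 1 : ℝ) = x ^ (r / 2 - 1 : ℝ) / (2 : ℝ) ^ (r / 2 - 1 : ℝ) :=
    Real.div_rpow hx.le (by norm_num : (0:ℝ) ≤ 2) _
  have e2 : (2 : ℝ) ^ (r / 2 - 1 : ℝ) = (2 : ℝ) ^ (r / 2 : ℝ) / 2 := by
    rw [Real.rpow_sub two_pos, Real.rpow_one]
  have e3 : x ^ (r / 2 + j - 1 : ℝ) = x ^ (r / 2 - 1 : ℝ) * x ^ j := by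
    rw [← Real.rpow_natCast x j, ← Real.rpow_add hx]
    ring_nf
  have e4 : Real.exp ((x + lam) / 2) = Real.exp (2⁻¹ * x) * Real.exp (lam / 2) := by
    rw [← Real.exp_add]; ring_nf
  have e5 : Real.exp (-(2⁻¹ * x)) = (Real.exp (2⁻¹ * x))⁻¹ := Real.exp_neg _
  have e6 : Real.exp (-(lam / 2)) = (Real.exp (lam / 2))⁻¹ := Real.exp_neg _
  have e7 : (lam * x / 4 : ℝ) ^ j = lam ^ j * x ^ j / 4 ^ j := by rw [div_pow, mul_pow]
  have e8 : (lam / 2 : ℝ) ^ j = lam ^ j / 2 ^ j := div_pow lam 2 j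
  have e9 : (4 : ℝ) ^ j = 2 ^ j * 2 ^ j := by rw [← mul_pow]; norm_num
  rw [ccc, ggg, e1, e2, e3, e4, e5, e6, e7, e8, e9]
  have hE1 : Real.exp (2⁻¹ * x) ≠ 0 := Real.exp_ne_zero _
  have hE2 : Real.exp (lam / 2) ≠ 0 := Real.exp_ne_zero _
  field_simp

lemma ggg_integrableOn {r : ℝ} (hr : 0 < r) (j k : ℕ) :
    IntegrableOn (fun x => x ^ k * ggg r j x) (Ioi 0) := by
  have hs : (-1 : ℝ) < r / 2 + j + k - 1 := by
    have : (0:ℝ) ≤ (j:ℝ) := Nat.cast_nonneg j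
    have : (0:ℝ) ≤ (k:ℝ) := Nat.cast_nonneg k
    linarith [Nat.cast_nonneg (α := ℝ) j, Nat.cast_nonneg (α := ℝ) k]
  have h := integrableOn_rpow_mul_exp_neg_mul_rpow hs (by norm_num : (0:ℝ) < 1) (by norm_num : (0:ℝ) < 2⁻¹)
  refine h.congr_fun (fun x hx => ?_) measurableSet_Ioi
  have hx' : (0:ℝ) < x := hx
  simp only [Real.rpow_one, ggg]
  rw [show (r / 2 + j + k - 1 : ℝ) = (k : ℝ) + (r / 2 + j - 1) by ring,
    Real.rpow_add hx', Real.rpow_natCast]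
  ring

lemma ggg_integral {r : ℝ} (hr : 0 < r) (j k : ℕ) :
    ∫ x in Ioi 0, x ^ k * ggg r j x
      = 2 ^ (r / 2 + j + k : ℝ) * Real.Gamma (r / 2 + j + k) := by
  have ha : (0:ℝ) < r / 2 + j + k := by positivity
  calc ∫ x in Ioi 0, x ^ k * ggg r j x
      = ∫ x in Ioi 0, x ^ (r / 2 + j + k - 1 : ℝ) * Real.exp (-(2⁻¹ * x)) := by
        refine setIntegral_congr_fun measurableSet_Ioi (fun x hx => ?_)
        have hx' : (0:ℝ) < x := hx
        rw [ggg, show (r / 2 + j + k - 1 : ℝ) = (k : ℝ) + (r / 2 + j - 1) by ring,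
          Real.rpow_add hx', Real.rpow_natCast]
        ring
    _ = (1 / 2⁻¹ : ℝ) ^ (r / 2 + j + k : ℝ) * Real.Gamma (r / 2 + j + k) :=
        Real.integral_rpow_mul_exp_neg_mul_Ioi ha (by norm_num)
    _ = 2 ^ (r / 2 + j + k : ℝ) * Real.Gamma (r / 2 + j + k) := by norm_num

lemma ccc_nonneg {r lam : ℝ} (hr : 0 < r) (hlam : 0 ≤ lam) (j : ℕ) :
    0 ≤ ccc r lam j := by
  have hΓ : 0 < Real.Gamma (r / 2 + j) := Real.Gamma_pos_of_pos (by positivity)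
  rw [ccc]
  positivity

lemma hasSum_exp_div (t : ℝ) :
    HasSum (fun j : ℕ => t ^ j / j.factorial) (Real.exp t) := by
  rw [Real.exp_eq_exp_ℝ]
  exact NormedSpace.expSeries_div_hasSum_exp t

lemma hasSum_mul_exp (t : ℝ) :
    HasSum (fun j : ℕ => (j : ℝ) * (t ^ j / j.factorial)) (t * Real.exp t) := by
  have h := (hasSum_exp_div t).mul_left t
  have heq : ∀ j : ℕ, ((j + 1 : ℕ) : ℝ) * (t ^ (j + 1) / ((j + 1).factorial : ℝ))
      = t * (t ^ j / j.factorial) := by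
    intro j
    have hf : (((j + 1).factorial : ℕ) : ℝ) = ((j + 1 : ℕ) : ℝ) * (j.factorial : ℝ) := by
      rw [Nat.factorial_succ]; push_cast; ring
    have hj1 : ((j + 1 : ℕ) : ℝ) ≠ 0 := by positivity
    have hjf : (j.factorial : ℝ) ≠ 0 := by positivity
    rw [hf]
    field_simp
    ring
  have h2 : HasSum (fun j : ℕ => ((j + 1 : ℕ) : ℝ) * (t ^ (j + 1) / ((j + 1).factorial : ℝ)))
      (t * Real.exp t) := by
    simp only [heq]; exact h
  have h3 := (hasSum_nat_add_iff
    (f := fun j : ℕ => (j : ℝ) * (t ^ j / (j.factorial : ℝ))) 1).mp h2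
  simpa using h3

lemma hasSum_sq_mul_exp (t : ℝ) :
    HasSum (fun j : ℕ => ((j : ℝ)) ^ 2 * (t ^ j / j.factorial)) ((t + t ^ 2) * Real.exp t) := by
  have h := ((hasSum_mul_exp t).add (hasSum_exp_div t)).mul_left t
  have heq : ∀ j : ℕ, ((j + 1 : ℕ) : ℝ) ^ 2 * (t ^ (j + 1) / ((j + 1).factorial : ℝ))
      = t * ((j : ℝ) * (t ^ j / j.factorial) + t ^ j / j.factorial) := by
    intro j
    have hf : (((j + 1).factorial : ℕ) : ℝ) = ((j + 1 : ℕ) : ℝ) * (j.factorial : ℝ) := by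
      rw [Nat.factorial_succ]; push_cast; ring
    have hj1 : ((j + 1 : ℕ) : ℝ) ≠ 0 := by positivity
    have hjf : (j.factorial : ℝ) ≠ 0 := by positivity
    rw [hf]
    field_simp
    push_cast
    ring
  have h2 : HasSum (fun j : ℕ => ((j + 1 : ℕ) : ℝ) ^ 2 * (t ^ (j + 1) / ((j + 1).factorial : ℝ)))
      (t * (t * Real.exp t + Real.exp t)) := by
    simp only [heq]; exact h
  have h3 := (hasSum_nat_add_iff
    (f := fun j : ℕ => (j : ℝ) ^ 2 * (t ^ j / (j.factorial : ℝ))) 1).mp h2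
  have : t * (t * Real.exp t + Real.exp t) = (t + t ^ 2) * Real.exp t := by ring
  rw [this] at h3
  simpa using h3

lemma hasSum_T0 {r lam : ℝ} (hr : 0 < r) (hlam : 0 ≤ lam) :
    HasSum (fun j : ℕ => ccc r lam j *
      (2 ^ (r / 2 + (j : ℝ) + ((0 : ℕ) : ℝ)) * Real.Gamma (r / 2 + (j : ℝ) + ((0 : ℕ) : ℝ)))) 1 := by
  have heq : ∀ j : ℕ, ccc r lam j *
      (2 ^ (r / 2 + (j : ℝ) + ((0 : ℕ) : ℝ)) * Real.Gamma (r / 2 + (j : ℝ) + ((0 : ℕ) : ℝ)))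
      = Real.exp (-(lam / 2)) * ((lam / 2) ^ j / (j.factorial : ℝ)) := by
    intro j
    have hΓ : 0 < Real.Gamma (r / 2 + j) := Real.Gamma_pos_of_pos (by positivity)
    have h2 : (2 : ℝ) ^ (r / 2 + (j : ℝ) + ((0 : ℕ) : ℝ))
        = (2 : ℝ) ^ (r / 2 : ℝ) * 2 ^ j := by
      rw [Nat.cast_zero, add_zero, Real.rpow_add two_pos, Real.rpow_natCast]
    have h2r : (0 : ℝ) < (2 : ℝ) ^ (r / 2 : ℝ) := Real.rpow_pos_of_pos two_pos _
    have hfac : (0 : ℝ) < (j.factorial : ℝ) := by positivity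
    rw [ccc, h2, Nat.cast_zero, add_zero]
    field_simp
  have hv : Real.exp (-(lam / 2)) * Real.exp (lam / 2) = 1 := by
    rw [← Real.exp_add]; simp
  have h := (hasSum_exp_div (lam / 2)).mul_left (Real.exp (-(lam / 2)))
  rw [hv] at h
  simpa only [heq] using h

lemma hasSum_T1 {r lam : ℝ} (hr : 0 < r) (hlam : 0 ≤ lam) :
    HasSum (fun j : ℕ => ccc r lam j *
      (2 ^ (r / 2 + (j : ℝ) + ((1 : ℕ) : ℝ)) * Real.Gamma (r / 2 + (j : ℝ) + ((1 : ℕ) : ℝ))))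
      (r + lam) := by
  have heq : ∀ j : ℕ, ccc r lam j *
      (2 ^ (r / 2 + (j : ℝ) + ((1 : ℕ) : ℝ)) * Real.Gamma (r / 2 + (j : ℝ) + ((1 : ℕ) : ℝ)))
      = Real.exp (-(lam / 2)) * (r * ((lam / 2) ^ j / (j.factorial : ℝ))
          + 2 * ((j : ℝ) * ((lam / 2) ^ j / (j.factorial : ℝ)))) := by
    intro j
    have hpos : (0 : ℝ) < r / 2 + j := by positivity
    have hΓ : 0 < Real.Gamma (r / 2 + j) := Real.Gamma_pos_of_pos hpos
    have hG1 : Real.Gamma (r / 2 + (j : ℝ) + ((1 : ℕ) : ℝ))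
        = (r / 2 + j) * Real.Gamma (r / 2 + j) := by
      rw [Nat.cast_one, Real.Gamma_add_one hpos.ne']
    have h2 : (2 : ℝ) ^ (r / 2 + (j : ℝ) + ((1 : ℕ) : ℝ))
        = (2 : ℝ) ^ (r / 2 : ℝ) * 2 ^ j * 2 := by
      rw [Nat.cast_one, Real.rpow_add two_pos, Real.rpow_add two_pos,
        Real.rpow_natCast, Real.rpow_one]
    have h2r : (0 : ℝ) < (2 : ℝ) ^ (r / 2 : ℝ) := Real.rpow_pos_of_pos two_pos _
    have hfac : (0 : ℝ) < (j.factorial : ℝ) := by positivity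
    rw [ccc, h2, hG1]
    field_simp
  have h := (((hasSum_exp_div (lam / 2)).mul_left r).add
    ((hasSum_mul_exp (lam / 2)).mul_left 2)).mul_left (Real.exp (-(lam / 2)))
  have hv : Real.exp (-(lam / 2)) * (r * Real.exp (lam / 2)
      + 2 * (lam / 2 * Real.exp (lam / 2))) = r + lam := by
    rw [Real.exp_neg]
    field_simp
  rw [hv] at h
  simpa only [heq] using h

lemma hasSum_T2 {r lam : ℝ} (hr : 0 < r) (hlam : 0 ≤ lam) :
    HasSum (fun j : ℕ => ccc r lam j *
      (2 ^ (r / 2 + (j : ℝ) + ((2 : ℕ) : ℝ)) * Real.Gamma (r / 2 + (j : ℝ) + ((2 : ℕ) : ℝ))))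
      ((r + lam) ^ 2 + 2 * (r + 2 * lam)) := by
  have heq : ∀ j : ℕ, ccc r lam j *
      (2 ^ (r / 2 + (j : ℝ) + ((2 : ℕ) : ℝ)) * Real.Gamma (r / 2 + (j : ℝ) + ((2 : ℕ) : ℝ)))
      = Real.exp (-(lam / 2)) * ((r ^ 2 + 2 * r) * ((lam / 2) ^ j / (j.factorial : ℝ))
          + (4 * r + 4) * ((j : ℝ) * ((lam / 2) ^ j / (j.factorial : ℝ)))
          + 4 * ((j : ℝ) ^ 2 * ((lam / 2) ^ j / (j.factorial : ℝ)))) := by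
    intro j
    have hpos : (0 : ℝ) < r / 2 + j := by positivity
    have hpos1 : (0 : ℝ) < r / 2 + j + 1 := by positivity
    have hΓ : 0 < Real.Gamma (r / 2 + j) := Real.Gamma_pos_of_pos hpos
    have hG2 : Real.Gamma (r / 2 + (j : ℝ) + ((2 : ℕ) : ℝ))
        = (r / 2 + j + 1) * ((r / 2 + j) * Real.Gamma (r / 2 + j)) := by
      rw [show (r / 2 + (j : ℝ) + ((2 : ℕ) : ℝ)) = (r / 2 + (j : ℝ) + 1) + 1 by push_cast; ring,
        Real.Gamma_add_one hpos1.ne', Real.Gamma_add_one hpos.ne']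
    have h2 : (2 : ℝ) ^ (r / 2 + (j : ℝ) + ((2 : ℕ) : ℝ))
        = (2 : ℝ) ^ (r / 2 : ℝ) * 2 ^ j * 4 := by
      rw [Real.rpow_add two_pos, Real.rpow_add two_pos, Real.rpow_natCast, Real.rpow_natCast]
      norm_num
    have h2r : (0 : ℝ) < (2 : ℝ) ^ (r / 2 : ℝ) := Real.rpow_pos_of_pos two_pos _
    have hfac : (0 : ℝ) < (j.factorial : ℝ) := by positivity
    rw [ccc, h2, hG2]
    field_simp
    ring
  have h := ((((hasSum_exp_div (lam / 2)).mul_left (r ^ 2 + 2 * r)).add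
    ((hasSum_mul_exp (lam / 2)).mul_left (4 * r + 4))).add
    ((hasSum_sq_mul_exp (lam / 2)).mul_left 4)).mul_left (Real.exp (-(lam / 2)))
  have hv : Real.exp (-(lam / 2)) * ((r ^ 2 + 2 * r) * Real.exp (lam / 2)
      + (4 * r + 4) * (lam / 2 * Real.exp (lam / 2))
      + 4 * ((lam / 2 + (lam / 2) ^ 2) * Real.exp (lam / 2)))
      = (r + lam) ^ 2 + 2 * (r + 2 * lam) := by
    rw [Real.exp_neg]
    field_simp
    ring
  rw [hv] at h
  simpa only [heq] using h

lemma chiSqPDF_nonneg {r lam : ℝ} (hr : 0 < r) (hlam : 0 ≤ lam) (x : ℝ) :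
    0 ≤ chiSqPDF r lam x := by
  rw [chiSqPDF]
  split_ifs with hx
  · refine mul_nonneg (by positivity) (tsum_nonneg fun j => ?_)
    have hΓ : 0 < Real.Gamma (r / 2 + j) := Real.Gamma_pos_of_pos (by positivity)
    have : (0 : ℝ) ≤ lam * x / 4 := by positivity
    positivity
  · exact le_rfl

lemma chiSqPDF_of_nonpos {r lam x : ℝ} (hx : ¬ 0 < x) : chiSqPDF r lam x = 0 := by
  rw [chiSqPDF, if_neg hx]

lemma measurable_chiSqPDF {r lam : ℝ} (hr : 0 < r) (hlam : 0 ≤ lam) :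
    Measurable (chiSqPDF r lam) := by
  have hrep : chiSqPDF r lam = (Ioi (0:ℝ)).indicator
      (fun x => ∑' j : ℕ, ccc r lam j * (|x| ^ (r / 2 + (j:ℝ) - 1) * Real.exp (-(2⁻¹ * x)))) := by
    funext x
    by_cases hx : 0 < x
    · rw [indicator_of_mem (show x ∈ Ioi (0:ℝ) from hx), chiSqPDF_series hr hx]
      exact tsum_congr fun j => by rw [ggg, abs_of_pos hx]
    · rw [chiSqPDF_of_nonpos hx, indicator_of_notMem (by simpa using hx)]
  rw [hrep]
  refine Measurable.indicator ?_ measurableSet_Ioi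
  refine measurable_tsum_nonneg (fun j => ?_) (fun j x => ?_)
  · exact (((measurable_id.abs).pow_const _).mul
      ((measurable_id.const_mul _).neg.exp)).const_mul _
  · have h1 : (0:ℝ) ≤ |x| ^ (r / 2 + (j:ℝ) - 1) := Real.rpow_nonneg (abs_nonneg x) _
    exact mul_nonneg (ccc_nonneg hr hlam j) (mul_nonneg h1 (Real.exp_pos _).le)

lemma chiSq_moment {r lam : ℝ} (hr : 0 < r) (hlam : 0 ≤ lam) (k : ℕ) {S : ℝ}
    (hS : HasSum (fun j : ℕ => ccc r lam j *
      (2 ^ (r / 2 + (j : ℝ) + (k : ℝ)) * Real.Gamma (r / 2 + (j : ℝ) + (k : ℝ)))) S) :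
    Integrable (fun x => x ^ k * chiSqPDF r lam x) ∧
      ∫ x, x ^ k * chiSqPDF r lam x = S := by
  set ν := volume.restrict (Ioi (0:ℝ)) with hν
  set F : ℕ → ℝ → ℝ := fun j x => ccc r lam j * (x ^ k * ggg r j x) with hF
  have hmem : ∀ᵐ x ∂ν, x ∈ Ioi (0:ℝ) :=
    self_mem_ae_restrict measurableSet_Ioi
  have hFint : ∀ j, Integrable (F j) ν := fun j =>
    ((ggg_integrableOn hr j k).const_mul _)
  have hFval : ∀ j, ∫ x, F j x ∂ν = ccc r lam j *
      (2 ^ (r / 2 + (j : ℝ) + (k : ℝ)) * Real.Gamma (r / 2 + (j : ℝ) + (k : ℝ))) := by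
    intro j
    rw [hF]
    simp only
    rw [integral_const_mul, ggg_integral hr j k]
  have hFnn : ∀ j, 0 ≤ᵐ[ν] F j := by
    intro j
    filter_upwards [hmem] with x hx
    have hx' : (0:ℝ) < x := hx
    have : (0:ℝ) ≤ x ^ (r / 2 + (j:ℝ) - 1) := Real.rpow_nonneg hx'.le _
    exact mul_nonneg (ccc_nonneg hr hlam j)
      (mul_nonneg (by positivity) (mul_nonneg this (Real.exp_pos _).le))
  have hFnormval : ∀ j, ∫ x, ‖F j x‖ ∂ν = ∫ x, F j x ∂ν := by
    intro j
    refine integral_congr_ae ?_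
    filter_upwards [hFnn j] with x hx
    exact Real.norm_of_nonneg hx
  have hsumval : Summable fun j => ∫ x, F j x ∂ν := by
    simp_rw [hFval]; exact hS.summable
  have hsum : Summable fun j => ∫ x, ‖F j x‖ ∂ν := by
    simp_rw [hFnormval]; exact hsumval
  have hpt : ∀ x ∈ Ioi (0:ℝ), x ^ k * chiSqPDF r lam x = ∑' j, F j x := by
    intro x hx
    rw [chiSqPDF_series hr hx, ← tsum_mul_left]
    exact tsum_congr fun j => by rw [hF]; ring
  constructor
  · have hGint : Integrable (fun x => ∑' j, F j x) ν :=
      integrable_tsum_nonneg hFint hFnn hsumval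
    have hres : IntegrableOn (fun x => x ^ k * chiSqPDF r lam x) (Ioi 0) := by
      refine hGint.congr ?_
      filter_upwards [hmem] with x hx
      exact (hpt x hx).symm
    have hind : (fun x => x ^ k * chiSqPDF r lam x)
        = (Ioi (0:ℝ)).indicator (fun x => x ^ k * chiSqPDF r lam x) := by
      funext x
      by_cases hx : 0 < x
      · rw [indicator_of_mem (show x ∈ Ioi (0:ℝ) from hx)]
      · rw [indicator_of_notMem (by simpa using hx), chiSqPDF_of_nonpos hx, mul_zero]
    rw [hind]
    exact (integrable_indicator_iff measurableSet_Ioi).2 hres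
  · have hind : (fun x => x ^ k * chiSqPDF r lam x)
        = (Ioi (0:ℝ)).indicator (fun x => x ^ k * chiSqPDF r lam x) := by
      funext x
      by_cases hx : 0 < x
      · rw [indicator_of_mem (show x ∈ Ioi (0:ℝ) from hx)]
      · rw [indicator_of_notMem (by simpa using hx), chiSqPDF_of_nonpos hx, mul_zero]
    calc ∫ x, x ^ k * chiSqPDF r lam x
        = ∫ x in Ioi 0, x ^ k * chiSqPDF r lam x := by
          conv_lhs => rw [hind]
          exact integral_indicator measurableSet_Ioi
      _ = ∫ x in Ioi 0, ∑' j, F j x := setIntegral_congr_fun measurableSet_Ioi hpt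
      _ = ∑' j, ∫ x, F j x ∂ν :=
          (integral_tsum_of_summable_integral_norm hFint hsum).symm
      _ = S := by simp_rw [hFval]; exact hS.tsum_eq

/-- First central moment of the noncentral chi-square distribution restricted to a
Borel set. -/
theorem chiSq_firstCentralMoment_on_event (r lam : ℝ) (hr : 0 < r) (hlam : 0 ≤ lam)
    (hlr : lam ≤ r) (A : Set ℝ) (hA : MeasurableSet A) :
    |∫ x in A, (x - (r + lam)) * chiSqPDF r lam x|
      ≤ Real.sqrt 6 * Real.sqrt r * Real.sqrt (∫ x in Aᶜ, chiSqPDF r lam x) := by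
  have hfnn : ∀ x, 0 ≤ chiSqPDF r lam x := chiSqPDF_nonneg hr hlam
  have hfmeas : Measurable (chiSqPDF r lam) := measurable_chiSqPDF hr hlam
  obtain ⟨hI0, hV0⟩ := chiSq_moment hr hlam 0 (hasSum_T0 hr hlam)
  obtain ⟨hI1, hV1⟩ := chiSq_moment hr hlam 1 (hasSum_T1 hr hlam)
  obtain ⟨hI2, hV2⟩ := chiSq_moment hr hlam 2 (hasSum_T2 hr hlam)
  have hI0' : Integrable (fun x => chiSqPDF r lam x) := by simpa using hI0
  have hV0' : ∫ x, chiSqPDF r lam x = 1 := by simpa using hV0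
  have hI1' : Integrable (fun x => x * chiSqPDF r lam x) := by simpa using hI1
  have hV1' : ∫ x, x * chiSqPDF r lam x = r + lam := by simpa using hV1
  set m : ℝ := r + lam with hm
  -- integrability of (x - m) f and its zero mean
  have hQeq : (fun x => (x - m) * chiSqPDF r lam x)
      = fun x => x * chiSqPDF r lam x - m * chiSqPDF r lam x := by
    funext x; ring
  have hQint : Integrable (fun x => (x - m) * chiSqPDF r lam x) := by
    rw [hQeq]; exact hI1'.sub (hI0'.const_mul m)
  have hQ0 : ∫ x, (x - m) * chiSqPDF r lam x = 0 := by
    rw [hQeq, integral_sub hI1' (hI0'.const_mul m), integral_const_mul, hV1', hV0']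
    simp [hm]
  -- second central moment
  have hSeq : (fun x => (x - m) ^ 2 * chiSqPDF r lam x)
      = fun x => (x ^ 2 * chiSqPDF r lam x - (2 * m) * (x * chiSqPDF r lam x))
          + m ^ 2 * chiSqPDF r lam x := by
    funext x; ring
  have hsub : Integrable (fun x => x ^ 2 * chiSqPDF r lam x
      - 2 * m * (x * chiSqPDF r lam x)) := hI2.sub (hI1'.const_mul (2 * m))
  have hSint : Integrable (fun x => (x - m) ^ 2 * chiSqPDF r lam x) := by
    rw [hSeq]
    exact hsub.add (hI0'.const_mul (m ^ 2))
  have hSval : ∫ x, (x - m) ^ 2 * chiSqPDF r lam x = 2 * (r + 2 * lam) := by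
    rw [hSeq, integral_add hsub (hI0'.const_mul (m ^ 2)),
      integral_sub hI2 (hI1'.const_mul (2 * m)), integral_const_mul, integral_const_mul,
      hV2, hV1', hV0']
    rw [hm]; ring
  -- pass to the complement
  have hsplit := integral_add_compl hA hQint
  rw [hQ0] at hsplit
  have hAeq : ∫ x in A, (x - m) * chiSqPDF r lam x
      = - ∫ x in Aᶜ, (x - m) * chiSqPDF r lam x := by linarith
  rw [hAeq, abs_neg]
  -- Cauchy-Schwarz on Aᶜ
  set ν : Measure ℝ := volume.restrict Aᶜ with hν
  set aa : ℝ → ℝ := fun x => |x - m| * Real.sqrt (chiSqPDF r lam x) with haa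
  set bb : ℝ → ℝ := fun x => Real.sqrt (chiSqPDF r lam x) with hbb
  have haanm : AEStronglyMeasurable aa ν :=
    ((measurable_id.sub_const m).abs.mul hfmeas.sqrt).aestronglyMeasurable
  have hbbnm : AEStronglyMeasurable bb ν := hfmeas.sqrt.aestronglyMeasurable
  have haa2 : Integrable (fun x => aa x ^ 2) ν := by
    refine (hSint.integrableOn).congr ?_
    refine Filter.Eventually.of_forall fun x => ?_
    show (x - m) ^ 2 * chiSqPDF r lam x = aa x ^ 2
    simp only [haa]
    rw [mul_pow, sq_abs, Real.sq_sqrt (hfnn x)]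
  have hbb2 : Integrable (fun x => bb x ^ 2) ν := by
    refine (hI0'.integrableOn).congr ?_
    refine Filter.Eventually.of_forall fun x => ?_
    show chiSqPDF r lam x = bb x ^ 2
    simp only [hbb]
    rw [Real.sq_sqrt (hfnn x)]
  have h2 : ENNReal.ofReal (2 : ℝ) = 2 := by
    norm_num
  have hmemaa : MemLp aa (ENNReal.ofReal (2:ℝ)) ν := by
    rw [h2]; exact (memLp_two_iff_integrable_sq haanm).2 haa2
  have hmembb : MemLp bb (ENNReal.ofReal (2:ℝ)) ν := by
    rw [h2]; exact (memLp_two_iff_integrable_sq hbbnm).2 hbb2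
  have hpq : (2:ℝ).HolderConjugate 2 := by
    rw [Real.holderConjugate_iff]; norm_num
  have haann : 0 ≤ᵐ[ν] aa :=
    Filter.Eventually.of_forall fun x => mul_nonneg (abs_nonneg _) (Real.sqrt_nonneg _)
  have hbbnn : 0 ≤ᵐ[ν] bb :=
    Filter.Eventually.of_forall fun x => Real.sqrt_nonneg _
  have hCS := integral_mul_le_Lp_mul_Lq_of_nonneg hpq haann hbbnn hmemaa hmembb
  have hr2 : ∀ y : ℝ, y ^ (2:ℝ) = y ^ 2 := fun y => by
    rw [show (2:ℝ) = ((2:ℕ):ℝ) by norm_num, Real.rpow_natCast]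
  have habprod : ∫ x, aa x * bb x ∂ν = ∫ x in Aᶜ, |x - m| * chiSqPDF r lam x := by
    refine integral_congr_ae (Filter.Eventually.of_forall fun x => ?_)
    show aa x * bb x = |x - m| * chiSqPDF r lam x
    simp only [haa, hbb]
    rw [mul_assoc, Real.mul_self_sqrt (hfnn x)]
  have step1 : |∫ x in Aᶜ, (x - m) * chiSqPDF r lam x|
      ≤ ∫ x in Aᶜ, |x - m| * chiSqPDF r lam x := by
    calc |∫ x in Aᶜ, (x - m) * chiSqPDF r lam x|
        = ‖∫ x in Aᶜ, (x - m) * chiSqPDF r lam x‖ := (Real.norm_eq_abs _).symm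
      _ ≤ ∫ x in Aᶜ, ‖(x - m) * chiSqPDF r lam x‖ := norm_integral_le_integral_norm _
      _ = ∫ x in Aᶜ, |x - m| * chiSqPDF r lam x := by
          refine integral_congr_ae (Filter.Eventually.of_forall fun x => ?_)
          show ‖(x - m) * chiSqPDF r lam x‖ = |x - m| * chiSqPDF r lam x
          rw [Real.norm_eq_abs, abs_mul, abs_of_nonneg (hfnn x)]
  have haa2val : ∫ x, aa x ^ 2 ∂ν = ∫ x in Aᶜ, (x - m) ^ 2 * chiSqPDF r lam x := by
    refine integral_congr_ae (Filter.Eventually.of_forall fun x => ?_)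
    show aa x ^ 2 = (x - m) ^ 2 * chiSqPDF r lam x
    simp only [haa]
    rw [mul_pow, sq_abs, Real.sq_sqrt (hfnn x)]
  have hvar : ∫ x, aa x ^ 2 ∂ν ≤ 6 * r := by
    rw [haa2val]
    have h2' : ∫ x in Aᶜ, (x - m) ^ 2 * chiSqPDF r lam x
        ≤ ∫ x, (x - m) ^ 2 * chiSqPDF r lam x :=
      setIntegral_le_integral hSint
        (Filter.Eventually.of_forall fun x => mul_nonneg (sq_nonneg _) (hfnn x))
    rw [hSval] at h2'
    have : 2 * (r + 2 * lam) ≤ 6 * r := by linarith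
    linarith
  have hbbval : ∫ x, bb x ^ 2 ∂ν = ∫ x in Aᶜ, chiSqPDF r lam x := by
    refine integral_congr_ae (Filter.Eventually.of_forall fun x => ?_)
    show bb x ^ 2 = chiSqPDF r lam x
    simp only [hbb]
    rw [Real.sq_sqrt (hfnn x)]
  calc |∫ x in Aᶜ, (x - m) * chiSqPDF r lam x|
      ≤ ∫ x in Aᶜ, |x - m| * chiSqPDF r lam x := step1
    _ = ∫ x, aa x * bb x ∂ν := habprod.symm
    _ ≤ (∫ x, aa x ^ (2:ℝ) ∂ν) ^ ((1:ℝ)/2) * (∫ x, bb x ^ (2:ℝ) ∂ν) ^ ((1:ℝ)/2) := hCS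
    _ = Real.sqrt (∫ x, aa x ^ 2 ∂ν) * Real.sqrt (∫ x, bb x ^ 2 ∂ν) := by
        simp_rw [hr2]
        rw [← Real.sqrt_eq_rpow, ← Real.sqrt_eq_rpow]
    _ ≤ Real.sqrt (6 * r) * Real.sqrt (∫ x in Aᶜ, chiSqPDF r lam x) := by
        rw [hbbval]
        exact mul_le_mul_of_nonneg_right (Real.sqrt_le_sqrt hvar) (Real.sqrt_nonneg _)
    _ = Real.sqrt 6 * Real.sqrt r * Real.sqrt (∫ x in Aᶜ, chiSqPDF r lam x) := by
        rw [Real.sqrt_mul (by norm_num : (0:ℝ) ≤ 6)]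
end

section
/- Let λ = λ(r) ≥ 0 be any choice of noncentrality parameter with λ(r)/√r → 0 as r → ∞, and let X be a random variable with density f_{r,λ} (i.e. X ~ χ²_r(λ)). Then there exists R > 0 such that for all r ≥ R, ℙ( X ∈ B_{r,λ}(1/2)ᶜ ) ≤ 100 exp( −(1/100) r^{1/3} ), where B_{r,λ}(1/2)ᶜ denotes the complement in (0,∞) of the bulk B_{r,λ}(1/2). -/
open Real MeasureTheory Set Filter

section Aux
lemma auxCS_gamma_ge {s : ℝ} (hs : 1 ≤ s) : ∀ j : ℕ, Real.Gamma s * s ^ j ≤ Real.Gamma (s + j) := by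
  intro j
  induction j with
  | zero => simp
  | succ j ih =>
    have h0 : (0:ℝ) < s := lt_of_lt_of_le one_pos hs
    have hsj : (0:ℝ) < s + j := by positivity
    have heq : Real.Gamma (s + (j+1:ℕ)) = (s + j) * Real.Gamma (s + j) := by
      push_cast
      rw [show s + ((j:ℝ) + 1) = (s + j) + 1 by ring, Real.Gamma_add_one hsj.ne']
    rw [heq]
    calc Real.Gamma s * s ^ (j+1) = s * (Real.Gamma s * s ^ j) := by ring
      _ ≤ s * Real.Gamma (s + j) := by
          exact mul_le_mul_of_nonneg_left ih h0.le
      _ ≤ (s + j) * Real.Gamma (s + j) := by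
          exact mul_le_mul_of_nonneg_right (by linarith [Nat.cast_nonneg (α := ℝ) j])
            (Real.Gamma_pos_of_pos hsj).le

lemma auxCS_log_one_sub {w : ℝ} (h0 : 0 ≤ w) (h3 : w ≤ 1/3) :
    -Real.log (1 - w) ≤ w + (3/2) * w^2 := by
  have hq : 0 < 1 - w := by linarith
  have h := Real.log_le_sub_one_of_pos (show (0:ℝ) < (1 - w)⁻¹ by positivity)
  rw [Real.log_inv] at h
  have h2 : (1 - w)⁻¹ - 1 = w / (1 - w) := by field_simp; ring
  rw [h2] at h
  have h3' : w / (1 - w) ≤ w + (3/2) * w^2 := by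
    rw [div_le_iff₀ hq]; nlinarith
  linarith

lemma auxCS_log_one_add {w : ℝ} (h0 : 0 ≤ w) : w - w^2 ≤ Real.log (1 + w) := by
  have hq : 0 < 1 + w := by linarith
  have h := Real.log_le_sub_one_of_pos (show (0:ℝ) < (1 + w)⁻¹ by positivity)
  rw [Real.log_inv] at h
  have h2 : (1 + w)⁻¹ - 1 = -(w / (1 + w)) := by field_simp; ring
  rw [h2] at h
  have h3' : w - w^2 ≤ w / (1 + w) := by
    rw [le_div_iff₀ hq]; nlinarith
  linarith

lemma auxCS_integrable {s c : ℝ} (hs : 0 < s) (hc : 0 < c) :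
    IntegrableOn (fun x : ℝ => x ^ (s-1) * Real.exp (-(c*x))) (Set.Ioi 0) := by
  have := integrableOn_rpow_mul_exp_neg_mul_rpow (show (-1:ℝ) < s - 1 by linarith) (zero_lt_one : (0:ℝ) < 1) hc
  simpa [Real.rpow_one, neg_mul] using this

lemma auxCS_gamma_integral {s c : ℝ} (hs : 0 < s) (hc : 0 < c) :
    ∫ x in Set.Ioi (0:ℝ), x ^ (s-1) * Real.exp (-(c*x)) = (1/c)^s * Real.Gamma s :=
  Real.integral_rpow_mul_exp_neg_mul_Ioi hs hc

lemma auxCS_exp_tsum (z : ℝ) : ∑' n : ℕ, z ^ n / (n.factorial : ℝ) = Real.exp z := by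
  rw [Real.exp_eq_exp_ℝ, NormedSpace.exp_eq_tsum_div]

lemma auxCS_tail_up {s c t a K : ℝ} (hs : 0 < s) (ht : 0 < t) (htc : t < c)
    (hK : 0 ≤ K) (ha : 0 ≤ a) :
    ∫ x in Set.Ioi a, K * (x ^ (s-1) * Real.exp (-(c*x)))
      ≤ K * Real.exp (-(t*a)) * ((1/(c-t))^s * Real.Gamma s) := by
  have hct : 0 < c - t := by linarith
  have hc : 0 < c := ht.trans htc
  have hint1 : IntegrableOn (fun x : ℝ => K * (x ^ (s-1) * Real.exp (-(c*x)))) (Set.Ioi a) :=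
    IntegrableOn.mono_set ((auxCS_integrable hs hc).const_mul K) (Set.Ioi_subset_Ioi ha)
  have hint2 : IntegrableOn
      (fun x : ℝ => (K * Real.exp (-(t*a))) * (x ^ (s-1) * Real.exp (-((c-t)*x)))) (Set.Ioi 0) :=
    (auxCS_integrable hs hct).const_mul _
  calc ∫ x in Set.Ioi a, K * (x ^ (s-1) * Real.exp (-(c*x)))
      ≤ ∫ x in Set.Ioi a, (K * Real.exp (-(t*a))) * (x ^ (s-1) * Real.exp (-((c-t)*x))) := by
        refine setIntegral_mono_on hint1 (hint2.mono_set (Set.Ioi_subset_Ioi ha))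
          measurableSet_Ioi ?_
        intro x hx
        have hax : a < x := hx
        have hx0 : 0 < x := lt_of_le_of_lt ha hax
        have hexp : Real.exp (-(c*x)) ≤ Real.exp (-(t*a)) * Real.exp (-((c-t)*x)) := by
          rw [← Real.exp_add]
          apply Real.exp_le_exp.mpr
          nlinarith [mul_le_mul_of_nonneg_left hax.le ht.le]
        calc K * (x ^ (s-1) * Real.exp (-(c*x)))
            ≤ K * (x ^ (s-1) * (Real.exp (-(t*a)) * Real.exp (-((c-t)*x)))) := by
              exact mul_le_mul_of_nonneg_left
                (mul_le_mul_of_nonneg_left hexp (Real.rpow_nonneg hx0.le _)) hK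
          _ = (K * Real.exp (-(t*a))) * (x ^ (s-1) * Real.exp (-((c-t)*x))) := by ring
    _ ≤ ∫ x in Set.Ioi (0:ℝ), (K * Real.exp (-(t*a))) * (x ^ (s-1) * Real.exp (-((c-t)*x))) := by
        refine setIntegral_mono_set hint2 ?_ ((Set.Ioi_subset_Ioi ha).eventuallyLE)
        filter_upwards [self_mem_ae_restrict (measurableSet_Ioi : MeasurableSet (Set.Ioi (0:ℝ)))]
          with x hx
        have hx0 : 0 < x := hx
        positivity
    _ = K * Real.exp (-(t*a)) * ((1/(c-t))^s * Real.Gamma s) := by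
        rw [integral_const_mul, auxCS_gamma_integral hs hct]

lemma auxCS_tail_low {s c t b K : ℝ} (hs : 0 < s) (hc : 0 < c) (ht : 0 < t)
    (hK : 0 ≤ K) (hb : 0 < b) :
    ∫ x in Set.Ioc 0 b, K * (x ^ (s-1) * Real.exp (-(c*x)))
      ≤ K * Real.exp (t*b) * ((1/(c+t))^s * Real.Gamma s) := by
  have hct : 0 < c + t := by linarith
  have hsub : Set.Ioc (0:ℝ) b ⊆ Set.Ioi 0 := Set.Ioc_subset_Ioi_self
  have hint1 : IntegrableOn (fun x : ℝ => K * (x ^ (s-1) * Real.exp (-(c*x)))) (Set.Ioc 0 b) :=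
    IntegrableOn.mono_set ((auxCS_integrable hs hc).const_mul K) hsub
  have hint2 : IntegrableOn
      (fun x : ℝ => (K * Real.exp (t*b)) * (x ^ (s-1) * Real.exp (-((c+t)*x)))) (Set.Ioi 0) :=
    (auxCS_integrable hs hct).const_mul _
  calc ∫ x in Set.Ioc (0:ℝ) b, K * (x ^ (s-1) * Real.exp (-(c*x)))
      ≤ ∫ x in Set.Ioc (0:ℝ) b, (K * Real.exp (t*b)) * (x ^ (s-1) * Real.exp (-((c+t)*x))) := by
        refine setIntegral_mono_on hint1 (hint2.mono_set hsub) measurableSet_Ioc ?_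
        intro x hx
        have hx0 : 0 < x := hx.1
        have hxb : x ≤ b := hx.2
        have hexp : Real.exp (-(c*x)) ≤ Real.exp (t*b) * Real.exp (-((c+t)*x)) := by
          rw [← Real.exp_add]
          apply Real.exp_le_exp.mpr
          nlinarith [mul_le_mul_of_nonneg_left hxb ht.le]
        calc K * (x ^ (s-1) * Real.exp (-(c*x)))
            ≤ K * (x ^ (s-1) * (Real.exp (t*b) * Real.exp (-((c+t)*x)))) := by
              exact mul_le_mul_of_nonneg_left
                (mul_le_mul_of_nonneg_left hexp (Real.rpow_nonneg hx0.le _)) hK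
          _ = (K * Real.exp (t*b)) * (x ^ (s-1) * Real.exp (-((c+t)*x))) := by ring
    _ ≤ ∫ x in Set.Ioi (0:ℝ), (K * Real.exp (t*b)) * (x ^ (s-1) * Real.exp (-((c+t)*x))) := by
        refine setIntegral_mono_set hint2 ?_ hsub.eventuallyLE
        filter_upwards [self_mem_ae_restrict (measurableSet_Ioi : MeasurableSet (Set.Ioi (0:ℝ)))]
          with x hx
        have hx0 : 0 < x := hx
        positivity
    _ = K * Real.exp (t*b) * ((1/(c+t))^s * Real.Gamma s) := by
        rw [integral_const_mul, auxCS_gamma_integral hs hct]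

lemma auxCS_pdf_le {r lam x : ℝ} (hr : 2 ≤ r) (hl : 0 ≤ lam) (hx : 0 < x) :
    chiSqPDF r lam x ≤ (Real.exp (-(lam/2)) / (2 ^ (r/2) * Real.Gamma (r/2))) *
      (x ^ (r/2 - 1) * Real.exp (-((1/2 - lam/(2*r)) * x))) := by
  have hr0 : (0:ℝ) < r := by linarith
  have hs1 : (1:ℝ) ≤ r/2 := by linarith
  have hs0 : (0:ℝ) < r/2 := by linarith
  have hG : 0 < Real.Gamma (r/2) := Real.Gamma_pos_of_pos hs0
  rw [chiSqPDF, if_pos hx]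
  have hterm : ∀ j : ℕ, (lam * x / 4) ^ j / ((j.factorial : ℝ) * Real.Gamma (r / 2 + (j:ℝ)))
      ≤ ((lam*x/(2*r)) ^ j / (j.factorial : ℝ)) / Real.Gamma (r/2) := by
    intro j
    have hfac : (0:ℝ) < (j.factorial : ℝ) := Nat.cast_pos.mpr (Nat.factorial_pos j)
    have hGj : 0 < Real.Gamma (r/2 + (j:ℝ)) := Real.Gamma_pos_of_pos (by positivity)
    have hkey := auxCS_gamma_ge hs1 j
    have h1 : (lam * x / 4)^j / ((j.factorial:ℝ) * Real.Gamma (r/2 + (j:ℝ)))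
        ≤ (lam * x / 4)^j / ((j.factorial:ℝ) * (Real.Gamma (r/2) * (r/2)^j)) := by
      apply div_le_div_of_nonneg_left (by positivity) (by positivity)
      exact mul_le_mul_of_nonneg_left hkey hfac.le
    refine h1.trans (le_of_eq ?_)
    have h2 : (lam*x/(2*r))^j = (lam*x/4)^j / (r/2)^j := by
      rw [← div_pow]; congr 1; field_simp; ring
    rw [h2, div_div, div_div]
    congr 1
    ring
  have hsumm : Summable (fun j : ℕ => ((lam*x/(2*r))^j / (j.factorial:ℝ)) / Real.Gamma (r/2)) :=
    (Real.summable_pow_div_factorial _).div_const _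
  have hsummL : Summable (fun j : ℕ =>
      (lam * x / 4) ^ j / ((j.factorial : ℝ) * Real.Gamma (r / 2 + (j:ℝ)))) := by
    refine Summable.of_nonneg_of_le (fun j => ?_) hterm hsumm
    have hGj : 0 < Real.Gamma (r/2 + (j:ℝ)) := Real.Gamma_pos_of_pos (by positivity)
    positivity
  have hsum : (∑' j : ℕ, (lam * x / 4) ^ j / ((j.factorial : ℝ) * Real.Gamma (r / 2 + (j : ℝ))))
      ≤ Real.exp (lam*x/(2*r)) / Real.Gamma (r/2) := by
    calc (∑' j : ℕ, (lam * x / 4) ^ j / ((j.factorial : ℝ) * Real.Gamma (r / 2 + (j : ℝ))))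
        ≤ ∑' j : ℕ, ((lam*x/(2*r)) ^ j / (j.factorial : ℝ)) / Real.Gamma (r/2) :=
          Summable.tsum_le_tsum hterm hsummL hsumm
      _ = Real.exp (lam*x/(2*r)) / Real.Gamma (r/2) := by
          rw [tsum_div_const, auxCS_exp_tsum]
  have hpre : 0 ≤ (x / 2) ^ (r / 2 - 1) / (2 * Real.exp ((x + lam) / 2)) := by positivity
  refine le_trans (mul_le_mul_of_nonneg_left hsum hpre) (le_of_eq ?_)
  rw [Real.div_rpow hx.le (by norm_num : (0:ℝ) ≤ 2)]
  have h2p : (2:ℝ) ^ (r/2) = 2 ^ (r/2 - 1) * 2 := by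
    have h := Real.rpow_add_one (by norm_num : (2:ℝ) ≠ 0) (r/2-1)
    rw [show r/2 - 1 + 1 = r/2 by ring] at h
    exact h
  have hexp2 : Real.exp (lam*x/(2*r)) =
      Real.exp (-(lam/2)) * Real.exp (-((1/2 - lam/(2*r)) * x)) * Real.exp ((x+lam)/2) := by
    rw [← Real.exp_add, ← Real.exp_add]
    congr 1
    field_simp
    ring
  rw [hexp2, h2p]
  have hE := Real.exp_ne_zero ((x+lam)/2)
  have h2ne : ((2:ℝ) ^ (r/2 - 1)) ≠ 0 := by positivity
  field_simp

end Aux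

set_option maxHeartbeats 2000000 in
/-- Concentration bound: the noncentral chi-square distribution puts exponentially
little mass outside the bulk `B_{r,λ}(1/2)`. -/
theorem chiSq_bulk_concentration :
    ∀ lam : ℝ → ℝ, (∀ r, 0 ≤ lam r) →
      Filter.Tendsto (fun r => lam r / Real.sqrt r) Filter.atTop (nhds 0) →
      ∃ R > (0:ℝ), ∀ r ≥ R,
        (∫ x in Set.Ioi 0 \ bulk r (lam r) (1/2), chiSqPDF r (lam r) x)
          ≤ 100 * Real.exp (-(1/100) * r ^ ((1:ℝ)/3)) := by
  intro lam hlam0 htend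
  obtain ⟨R₀, hR₀⟩ := eventually_atTop.mp (htend.eventually_lt_const one_pos)
  refine ⟨max R₀ ((10:ℝ)^12), lt_of_lt_of_le (by norm_num) (le_max_right _ _), ?_⟩
  intro r hrR
  set L := lam r with hLdef
  clear_value L
  have hL0 : 0 ≤ L := by rw [hLdef]; exact hlam0 r
  have hrbig : (10:ℝ)^12 ≤ r := le_trans (le_max_right _ _) hrR
  have hten : (2:ℝ) ≤ (10:ℝ)^12 := by norm_num
  have hr0 : (0:ℝ) < r := by linarith
  have hr1 : (1:ℝ) ≤ r := by linarith
  have hr2 : (2:ℝ) ≤ r := by linarith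
  have hLsq : L ≤ Real.sqrt r := by
    have h := hR₀ r (le_trans (le_max_left _ _) hrR)
    have hsq : 0 < Real.sqrt r := Real.sqrt_pos.mpr hr0
    rw [hLdef]
    exact le_of_lt ((div_lt_one hsq).mp h)
  -- abbreviations
  set E := r ^ (-(1:ℝ)/3) with hEdef
  clear_value E
  set P := r ^ ((1:ℝ)/3) with hPdef
  clear_value P
  set y := r ^ ((1:ℝ)/6) with hydef
  clear_value y
  have hE0 : 0 < E := by rw [hEdef]; exact Real.rpow_pos_of_pos hr0 _
  have hP0 : 0 < P := by rw [hPdef]; exact Real.rpow_pos_of_pos hr0 _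
  have hy0 : 0 < y := by rw [hydef]; exact Real.rpow_pos_of_pos hr0 _
  have hE1 : E ≤ 1 := by rw [hEdef]; exact Real.rpow_le_one_of_one_le_of_nonpos hr1 (by norm_num)
  have hyy : y * y = P := by
    rw [hydef, hPdef, ← Real.rpow_add hr0]; norm_num
  have hrE2 : r * E^2 = P := by
    rw [hEdef, hPdef, sq]
    calc r * (r ^ (-(1:ℝ)/3) * r ^ (-(1:ℝ)/3))
        = r ^ (1:ℝ) * (r ^ (-(1:ℝ)/3) * r ^ (-(1:ℝ)/3)) := by rw [Real.rpow_one]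
      _ = r ^ ((1:ℝ)/3) := by rw [← Real.rpow_add hr0, ← Real.rpow_add hr0]; norm_num
  have hy100 : (100:ℝ) ≤ y := by
    have h1 : ((10:ℝ)^12) ^ ((1:ℝ)/6) ≤ r ^ ((1:ℝ)/6) :=
      Real.rpow_le_rpow (by positivity) hrbig (by norm_num)
    have h2 : ((10:ℝ)^12) ^ ((1:ℝ)/6) = 100 := by
      rw [← Real.rpow_natCast (10:ℝ) 12, ← Real.rpow_mul (by norm_num : (0:ℝ) ≤ 10)]
      norm_num
    rw [hydef]
    linarith
  have hsqrt_eq : Real.sqrt r = r ^ ((1:ℝ)/2) := Real.sqrt_eq_rpow r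
  have hLE : L * E ≤ y := by
    calc L * E ≤ Real.sqrt r * E := mul_le_mul_of_nonneg_right hLsq hE0.le
      _ = y := by rw [hsqrt_eq, hEdef, hydef, ← Real.rpow_add hr0]; norm_num
  have hL2r : L^2 / r ≤ 1 := by
    rw [div_le_one hr0]
    nlinarith [Real.sq_sqrt hr0.le, Real.sqrt_nonneg r]
  have hLr : L / r ≤ E / 6 := by
    have hhalf : 0 < r ^ (-(1:ℝ)/2) := Real.rpow_pos_of_pos hr0 _
    have h1 : L / r ≤ r ^ (-(1:ℝ)/2) := by
      have key : r ^ ((1:ℝ)/2) / r = r ^ (-(1:ℝ)/2) := by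
        have h := Real.rpow_sub hr0 ((1:ℝ)/2) 1
        rw [Real.rpow_one] at h
        rw [← h]; norm_num
      calc L / r ≤ Real.sqrt r / r := by gcongr
        _ = r ^ (-(1:ℝ)/2) := by rw [hsqrt_eq, key]
    have hsplit : E = y * r ^ (-(1:ℝ)/2) := by
      rw [hEdef, hydef, ← Real.rpow_add hr0]; norm_num
    have h2 : r ^ (-(1:ℝ)/2) ≤ E / 6 := by
      rw [hsplit]
      have h3 : 100 * r ^ (-(1:ℝ)/2) ≤ y * r ^ (-(1:ℝ)/2) :=
        mul_le_mul_of_nonneg_right hy100 hhalf.le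
      linarith
    linarith
  -- main quantities
  set m := r + L with hmdef
  clear_value m
  have hm0 : 0 < m := by rw [hmdef]; linarith
  set a := m * (1 + E/2) with hadef
  clear_value a
  set b := m * (1 - E/2) with hbdef
  clear_value b
  have ha0 : 0 ≤ a := by rw [hadef]; exact mul_nonneg hm0.le (by linarith)
  have hb0 : 0 < b := by rw [hbdef]; exact mul_pos hm0 (by linarith)
  have hba : b < a := by
    rw [hadef, hbdef]
    exact mul_lt_mul_of_pos_left (by linarith) hm0
  have hs0 : (0:ℝ) < r/2 := by linarith
  set c := 1/2 - L/(2*r) with hcdef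
  clear_value c
  set t := E/12 with htdef
  clear_value t
  have ht0 : 0 < t := by rw [htdef]; linarith
  set w := L/r + E/6 with hwdef
  clear_value w
  have hw0 : 0 ≤ w := by
    rw [hwdef]; have := div_nonneg hL0 hr0.le; linarith
  have hw3 : w ≤ 1/3 := by rw [hwdef]; linarith [hLr, hE1]
  have hq0 : 0 < 1 - w := by linarith
  have hct : c - t = (1 - w)/2 := by
    rw [hcdef, htdef, hwdef]; field_simp; ring
  have htc : t < c := by linarith [hct, hq0]
  have hc0 : 0 < c := ht0.trans htc
  set w2 := E/6 - L/r with hw2def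
  clear_value w2
  have hw20 : 0 ≤ w2 := by rw [hw2def]; linarith [hLr]
  have hw2E : w2 ≤ E/6 := by
    rw [hw2def]; have := div_nonneg hL0 hr0.le; linarith
  have hct2 : c + t = (1 + w2)/2 := by
    rw [hcdef, htdef, hw2def]; field_simp; ring
  set K := Real.exp (-(L/2)) / (2 ^ (r/2) * Real.Gamma (r/2)) with hKdef
  clear_value K
  have hG : 0 < Real.Gamma (r/2) := Real.Gamma_pos_of_pos hs0
  have hK0 : 0 ≤ K := by rw [hKdef]; positivity
  -- measurability of the region
  have hmeas_bulk : MeasurableSet (bulk r L (1/2)) := by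
    have hrw : bulk r L (1/2) = Set.Ioi 0 ∩
        {x : ℝ | |stdDelta r L x / Drl r L| ≤ 1/2 * r ^ (-(1:ℝ)/3)} := by
      ext x; simp [bulk, Set.mem_setOf_eq, Set.mem_inter_iff, Set.mem_Ioi]
    rw [hrw]
    refine measurableSet_Ioi.inter (measurableSet_le ?_ measurable_const)
    have hfun : (fun x : ℝ => |stdDelta r L x / Drl r L|) =
        fun x : ℝ => |((x - (r + L)) / Real.sqrt (2*(r+2*L))) / Drl r L| := rfl
    rw [hfun]
    exact (((measurable_id.sub_const _).div_const _).div_const _).abs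
  have hmeasS : MeasurableSet (Set.Ioi (0:ℝ) \ bulk r L (1/2)) :=
    measurableSet_Ioi.diff hmeas_bulk
  -- region inclusion
  have hsub : Set.Ioi (0:ℝ) \ bulk r L (1/2) ⊆ Set.Ioc 0 b ∪ Set.Ioi a := by
    rintro x ⟨hx0, hxnb⟩
    have hx0' : (0:ℝ) < x := hx0
    have hS0 : 0 < Real.sqrt (2*(r + 2*L)) := Real.sqrt_pos.mpr (by linarith)
    have hdiv : stdDelta r L x / Drl r L = (x - m)/m := by
      simp only [stdDelta, Drl, hmdef]
      rw [div_div_div_cancel_right₀ hS0.ne']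
    simp only [bulk, Set.mem_setOf_eq] at hxnb
    push_neg at hxnb
    have hgt : 1/2 * E < |(x - m)/m| := by
      rw [← hdiv, ← hEdef] at *
      exact hxnb hx0'
    rw [abs_div, abs_of_pos hm0, lt_div_iff₀ hm0] at hgt
    rcases lt_abs.mp hgt with h | h
    · right
      show a < x
      rw [hadef]
      have hexp : m * (1 + E/2) = m + 1/2 * E * m := by ring
      linarith
    · left
      refine ⟨hx0', ?_⟩
      rw [hbdef]
      have hexp : m * (1 - E/2) = m - 1/2 * E * m := by ring
      linarith
  -- integrability of the dominating function
  have hgint : IntegrableOn (fun x : ℝ => K * (x ^ (r/2 - 1) * Real.exp (-(c*x))))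
      (Set.Ioi 0) := (auxCS_integrable hs0 hc0).const_mul K
  have hUsub : Set.Ioc (0:ℝ) b ∪ Set.Ioi a ⊆ Set.Ioi 0 := by
    rintro x (hx | hx)
    · exact hx.1
    · exact lt_of_le_of_lt ha0 hx
  -- step 1 : compare with dominating function on the region
  have step1 : (∫ x in Set.Ioi 0 \ bulk r L (1/2), chiSqPDF r L x)
      ≤ ∫ x in Set.Ioi 0 \ bulk r L (1/2), K * (x ^ (r/2-1) * Real.exp (-(c*x))) := by
    by_cases hf : IntegrableOn (fun x => chiSqPDF r L x) (Set.Ioi 0 \ bulk r L (1/2))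
    · refine setIntegral_mono_on hf (hgint.mono_set Set.diff_subset) hmeasS ?_
      intro x hx
      have h := auxCS_pdf_le hr2 hL0 (hx.1 : (0:ℝ) < x)
      rw [hKdef, hcdef]
      exact h
    · rw [integral_undef hf]
      refine setIntegral_nonneg hmeasS ?_
      intro x hx
      have hx0' : (0:ℝ) < x := hx.1
      positivity
  -- step 2 : enlarge the region to the two tails
  have step2 : (∫ x in Set.Ioi 0 \ bulk r L (1/2), K * (x ^ (r/2-1) * Real.exp (-(c*x))))
      ≤ ∫ x in Set.Ioc 0 b ∪ Set.Ioi a, K * (x ^ (r/2-1) * Real.exp (-(c*x))) := by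
    refine setIntegral_mono_set (hgint.mono_set hUsub) ?_ hsub.eventuallyLE
    filter_upwards [self_mem_ae_restrict (measurableSet_Ioc.union measurableSet_Ioi)] with x hx
    have hx0' : (0:ℝ) < x := hUsub hx
    positivity
  -- step 3 : split the union
  have step3 : (∫ x in Set.Ioc 0 b ∪ Set.Ioi a, K * (x ^ (r/2-1) * Real.exp (-(c*x))))
      = (∫ x in Set.Ioc 0 b, K * (x ^ (r/2-1) * Real.exp (-(c*x))))
        + ∫ x in Set.Ioi a, K * (x ^ (r/2-1) * Real.exp (-(c*x))) := by
    refine setIntegral_union (Set.Ioc_disjoint_Ioi hba.le) measurableSet_Ioi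
      (hgint.mono_set Set.Ioc_subset_Ioi_self) (hgint.mono_set (Set.Ioi_subset_Ioi ha0))
  -- tail bounds from the Gamma integral
  have tail_up := auxCS_tail_up (s := r/2) (c := c) (t := t) (a := a) (K := K)
    hs0 ht0 htc hK0 ha0
  have tail_low := auxCS_tail_low (s := r/2) (c := c) (t := t) (b := b) (K := K)
    hs0 hc0 ht0 hK0 hb0
  -- numeric bound for the upper tail
  have hup : K * Real.exp (-(t*a)) * ((1/(c-t))^(r/2) * Real.Gamma (r/2))
      ≤ Real.exp (-(1/100) * P) := by
    have hbase : (1/(c-t)) ^ (r/2 : ℝ) = 2 ^ (r/2 : ℝ) * ((1-w)⁻¹) ^ (r/2:ℝ) := by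
      rw [show 1/(c-t) = 2 * (1-w)⁻¹ by rw [hct]; field_simp,
        Real.mul_rpow (by norm_num) (by positivity)]
    have hinv : ((1-w)⁻¹) ^ (r/2:ℝ) = Real.exp (-Real.log (1-w) * (r/2)) := by
      rw [Real.rpow_def_of_pos (by positivity), Real.log_inv]
    have hEq : K * Real.exp (-(t*a)) * ((1/(c-t))^(r/2) * Real.Gamma (r/2))
        = Real.exp (-(L/2) + -(t*a) + -Real.log (1-w) * (r/2)) := by
      rw [hKdef, hbase, hinv, Real.exp_add, Real.exp_add]
      have h2r : ((2:ℝ) ^ (r/2 : ℝ)) ≠ 0 := by positivity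
      field_simp
    rw [hEq]
    apply Real.exp_le_exp.mpr
    have hlog := auxCS_log_one_sub hw0 hw3
    have hmul : -Real.log (1-w) * (r/2) ≤ (w + 3/2*w^2) * (r/2) :=
      mul_le_mul_of_nonneg_right hlog (by linarith)
    have hexpand : -(L/2) + -(t*a) + (w + 3/2*w^2)*(r/2)
        = (L*E)/6 - (r*E^2)/48 - L*E^2/24 + (3/4)*(L^2/r) := by
      rw [htdef, hadef, hwdef, hmdef]; field_simp; ring
    have hLE2 : 0 ≤ L * E^2 := by positivity
    have h100y : 100 * y ≤ y * y := mul_le_mul_of_nonneg_right hy100 (by linarith)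
    calc -(L/2) + -(t*a) + -Real.log (1-w) * (r/2)
        ≤ -(L/2) + -(t*a) + (w + 3/2*w^2)*(r/2) := by linarith
      _ = (L*E)/6 - (r*E^2)/48 - L*E^2/24 + (3/4)*(L^2/r) := hexpand
      _ ≤ y/6 - P/48 + 3/4 := by linarith
      _ = y/6 - (y*y)/48 + 3/4 := by rw [hyy]
      _ ≤ -(1/100) * (y*y) := by linarith
      _ = -(1/100) * P := by rw [hyy]
  -- numeric bound for the lower tail
  have hlow : K * Real.exp (t*b) * ((1/(c+t))^(r/2) * Real.Gamma (r/2))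
      ≤ Real.exp (-(1/100) * P) := by
    have hq20 : (0:ℝ) < 1 + w2 := by linarith
    have hbase : (1/(c+t)) ^ (r/2 : ℝ) = 2 ^ (r/2 : ℝ) * ((1+w2)⁻¹) ^ (r/2:ℝ) := by
      rw [show 1/(c+t) = 2 * (1+w2)⁻¹ by rw [hct2]; field_simp,
        Real.mul_rpow (by norm_num) (by positivity)]
    have hinv : ((1+w2)⁻¹) ^ (r/2:ℝ) = Real.exp (-Real.log (1+w2) * (r/2)) := by
      rw [Real.rpow_def_of_pos (by positivity), Real.log_inv]
    have hEq : K * Real.exp (t*b) * ((1/(c+t))^(r/2) * Real.Gamma (r/2))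
        = Real.exp (-(L/2) + t*b + -Real.log (1+w2) * (r/2)) := by
      rw [hKdef, hbase, hinv, Real.exp_add, Real.exp_add]
      have h2r : ((2:ℝ) ^ (r/2 : ℝ)) ≠ 0 := by positivity
      field_simp
    rw [hEq]
    apply Real.exp_le_exp.mpr
    have hlog := auxCS_log_one_add hw20
    have hmul : -Real.log (1+w2) * (r/2) ≤ (-(w2 - w2^2)) * (r/2) := by
      have : -Real.log (1+w2) ≤ -(w2 - w2^2) := by linarith
      exact mul_le_mul_of_nonneg_right this (by linarith)
    have hexpand : -(L/2) + t*b + (-(w2 - w2^2))*(r/2)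
        = -(L*E)/12 - (r*E^2)/36 - L*E^2/24 + (1/2)*(L^2/r) := by
      rw [htdef, hbdef, hw2def, hmdef]; field_simp; ring
    have hLE2 : 0 ≤ L * E^2 := by positivity
    have hLE0 : 0 ≤ L * E := by positivity
    have h100y : 100 * y ≤ y * y := mul_le_mul_of_nonneg_right hy100 (by linarith)
    calc -(L/2) + t*b + -Real.log (1+w2) * (r/2)
        ≤ -(L/2) + t*b + (-(w2 - w2^2)) * (r/2) := by linarith
      _ = -(L*E)/12 - (r*E^2)/36 - L*E^2/24 + (1/2)*(L^2/r) := hexpand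
      _ ≤ -P/36 + 1/2 := by linarith
      _ = -(y*y)/36 + 1/2 := by rw [hyy]
      _ ≤ -(1/100) * (y*y) := by linarith
      _ = -(1/100) * P := by rw [hyy]
  -- put everything together
  calc (∫ x in Set.Ioi 0 \ bulk r L (1/2), chiSqPDF r L x)
      ≤ ∫ x in Set.Ioi 0 \ bulk r L (1/2), K * (x ^ (r/2-1) * Real.exp (-(c*x))) := step1
    _ ≤ ∫ x in Set.Ioc 0 b ∪ Set.Ioi a, K * (x ^ (r/2-1) * Real.exp (-(c*x))) := step2
    _ = (∫ x in Set.Ioc 0 b, K * (x ^ (r/2-1) * Real.exp (-(c*x))))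
        + ∫ x in Set.Ioi a, K * (x ^ (r/2-1) * Real.exp (-(c*x))) := step3
    _ ≤ K * Real.exp (t*b) * ((1/(c+t))^(r/2) * Real.Gamma (r/2))
        + K * Real.exp (-(t*a)) * ((1/(c-t))^(r/2) * Real.Gamma (r/2)) :=
          add_le_add tail_low tail_up
    _ ≤ Real.exp (-(1/100) * P) + Real.exp (-(1/100) * P) := add_le_add hlow hup
    _ ≤ 100 * Real.exp (-(1/100) * P) := by linarith [Real.exp_pos (-(1/100) * P)]
end

section
/- Fix λ ≥ 0. There exist constants β = β(λ) > 0, C = C(λ) > 0 and R > 0 such that for all r ≥ R and all a ∈ ℝ, the following two large deviation bounds hold: ∫_{[a,∞) ∩ B_{r,λ}(1/2)ᶜ} f_{r,λ}(x) dx ≤ C e^{−β r^{1/3}} and ∫_{ { y : y = δ_x for some x ∈ [a,∞) ∩ B_{r,λ}(1/2)ᶜ } } φ(y) dy ≤ C e^{−β r^{1/3}}, where φ is the standard normal density and B_{r,λ}(1/2)ᶜ denotes the complement in (0,∞) of the bulk B_{r,λ}(1/2). -/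
open Real MeasureTheory Set Filter

lemma Gamma_mul_pow_le {s : ℝ} (hs : 0 < s) (j : ℕ) :
    Real.Gamma s * s ^ j ≤ Real.Gamma (s + j) := by
  induction j with
  | zero => simp
  | succ n ih =>
      have hsn : (0:ℝ) < s + n := by positivity
      have h1 : Real.Gamma (s + ((n:ℝ)+1)) = (s + n) * Real.Gamma (s + n) := by
        rw [show (s + ((n:ℝ)+1)) = (s + n) + 1 by ring, Real.Gamma_add_one hsn.ne']
      push_cast
      rw [h1]
      calc Real.Gamma s * s ^ (n+1) = s * (Real.Gamma s * s ^ n) := by ring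
        _ ≤ (s + n) * (Real.Gamma s * s ^ n) := by
            apply mul_le_mul_of_nonneg_right (by linarith [Nat.cast_nonneg (α := ℝ) n])
            positivity
        _ ≤ (s + n) * Real.Gamma (s + n) := mul_le_mul_of_nonneg_left ih hsn.le

lemma tsum_chiSq_le {r lam x : ℝ} (hr : 0 < r) (hlam : 0 ≤ lam) (hx : 0 ≤ x) :
    (∑' j : ℕ, (lam * x / 4) ^ j / ((j.factorial : ℝ) * Real.Gamma (r / 2 + (j:ℝ))))
      ≤ Real.exp (lam * x / (2*r)) / Real.Gamma (r / 2) := by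
  have hs : (0:ℝ) < r / 2 := by linarith
  have hG : 0 < Real.Gamma (r/2) := Real.Gamma_pos_of_pos hs
  set y : ℝ := lam * x / 4 with hy
  have hy0 : 0 ≤ y := by positivity
  have hterm : ∀ j : ℕ, y ^ j / ((j.factorial : ℝ) * Real.Gamma (r / 2 + (j:ℝ)))
      ≤ (lam * x / (2*r)) ^ j / (j.factorial : ℝ) / Real.Gamma (r/2) := by
    intro j
    have hGj : 0 < Real.Gamma (r/2 + (j:ℝ)) := by
      apply Real.Gamma_pos_of_pos; positivity
    have hkey : (j.factorial : ℝ) * (Real.Gamma (r/2) * (r/2) ^ j)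
        ≤ (j.factorial : ℝ) * Real.Gamma (r/2 + j) := by
      exact mul_le_mul_of_nonneg_left (Gamma_mul_pow_le hs j) (by positivity)
    calc y ^ j / ((j.factorial : ℝ) * Real.Gamma (r / 2 + (j:ℝ)))
        ≤ y ^ j / ((j.factorial : ℝ) * (Real.Gamma (r/2) * (r/2) ^ j)) :=
          div_le_div_of_nonneg_left (by positivity) (by positivity) hkey
      _ = (lam * x / (2*r)) ^ j / (j.factorial : ℝ) / Real.Gamma (r/2) := by
          rw [show lam * x / (2*r) = y / (r/2) by rw [hy]; field_simp; ring, div_pow, hy]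
          rw [div_pow, div_pow]
          field_simp
          ring_nf
          simp only [mul_assoc, ← mul_pow]; norm_num
  have hsummR : Summable (fun j : ℕ => (lam * x / (2*r)) ^ j / (j.factorial : ℝ)) :=
    Real.summable_pow_div_factorial _
  have hsummR' : Summable (fun j : ℕ => (lam * x / (2*r)) ^ j / (j.factorial : ℝ) / Real.Gamma (r/2)) :=
    hsummR.div_const _
  have hnn : ∀ j : ℕ, 0 ≤ y ^ j / ((j.factorial : ℝ) * Real.Gamma (r / 2 + (j:ℝ))) := by
    intro j
    have hGj : 0 < Real.Gamma (r/2 + (j:ℝ)) := by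
      apply Real.Gamma_pos_of_pos; positivity
    positivity
  have hsummL : Summable (fun j : ℕ => y ^ j / ((j.factorial : ℝ) * Real.Gamma (r / 2 + (j:ℝ)))) :=
    Summable.of_nonneg_of_le hnn hterm hsummR'
  calc (∑' j : ℕ, y ^ j / ((j.factorial : ℝ) * Real.Gamma (r / 2 + (j:ℝ))))
      ≤ ∑' j : ℕ, (lam * x / (2*r)) ^ j / (j.factorial : ℝ) / Real.Gamma (r/2) :=
        Summable.tsum_le_tsum hterm hsummL hsummR'
    _ = (∑' j : ℕ, (lam * x / (2*r)) ^ j / (j.factorial : ℝ)) / Real.Gamma (r/2) := by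
        rw [tsum_div_const]
    _ = Real.exp (lam * x / (2*r)) / Real.Gamma (r/2) := by
        congr 1
        rw [Real.exp_eq_exp_ℝ, NormedSpace.exp_eq_tsum_div]

lemma pdf_le {r lam : ℝ} (hr : 0 < r) (hlam : 0 ≤ lam) {x : ℝ} (hx : 0 < x) :
    chiSqPDF r lam x ≤ x ^ (r/2 - 1) * Real.exp (-((1/2 - lam/(2*r)) * x)) *
      (Real.exp (-(lam/2)) / (2 ^ (r/2) * Real.Gamma (r/2))) := by
  have hG : 0 < Real.Gamma (r/2) := Real.Gamma_pos_of_pos (by linarith)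
  rw [chiSqPDF, if_pos hx]
  have hr0 : r ≠ 0 := ne_of_gt hr
  have h1 : (x / 2 : ℝ) ^ (r / 2 - 1) = x ^ (r/2-1) / 2 ^ (r/2-1) :=
    Real.div_rpow hx.le (by norm_num) (r/2-1)
  rw [h1]
  have hT := tsum_chiSq_le hr hlam hx.le
  have hbase : (0:ℝ) ≤ x ^ (r/2-1) / 2 ^ (r/2-1) / (2 * Real.exp ((x + lam)/2)) := by
    positivity
  calc x ^ (r/2-1) / 2 ^ (r/2-1) / (2 * Real.exp ((x + lam)/2)) *
        ∑' j : ℕ, (lam * x / 4) ^ j / ((j.factorial : ℝ) * Real.Gamma (r / 2 + (j:ℝ)))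
      ≤ x ^ (r/2-1) / 2 ^ (r/2-1) / (2 * Real.exp ((x + lam)/2)) *
        (Real.exp (lam * x / (2*r)) / Real.Gamma (r/2)) :=
        mul_le_mul_of_nonneg_left hT hbase
    _ = x ^ (r/2 - 1) * Real.exp (-((1/2 - lam/(2*r)) * x)) *
      (Real.exp (-(lam/2)) / (2 ^ (r/2) * Real.Gamma (r/2))) := by
        have h2 : (2:ℝ) ^ (r/2) = 2 ^ (r/2-1) * 2 := by
          have : (2:ℝ) ^ (r/2-1) * 2 = 2 ^ (r/2-1) * 2 ^ (1:ℝ) := by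
            rw [Real.rpow_one]
          rw [this, ← Real.rpow_add (by norm_num : (0:ℝ) < 2)]
          norm_num
        have hE2 : Real.exp (-((1/2 - lam/(2*r)) * x)) =
            Real.exp (lam * x / (2*r)) * Real.exp (-(x/2)) := by
          rw [← Real.exp_add]; congr 1; field_simp; ring
        have hE : Real.exp ((x + lam)/2) = Real.exp (x/2) * Real.exp (lam/2) := by
          rw [← Real.exp_add]; congr 1; ring
        rw [h2, hE2, hE, Real.exp_neg, Real.exp_neg]
        have e1 : Real.exp (x/2) ≠ 0 := (Real.exp_pos _).ne'
        have e2 : Real.exp (lam/2) ≠ 0 := (Real.exp_pos _).ne'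
        have e3 : (2:ℝ) ^ (r/2-1) ≠ 0 := by positivity
        field_simp

lemma integrableOn_g {s c : ℝ} (hs : 0 < s) (hc : 0 < c) :
    IntegrableOn (fun x : ℝ => x ^ (s-1) * Real.exp (-(c*x))) (Ioi 0) := by
  have h := integrableOn_rpow_mul_exp_neg_mul_rpow (p := 1) (s := s-1) (b := c)
    (by linarith) zero_lt_one hc
  apply h.congr_fun ?_ measurableSet_Ioi
  intro x hx
  simp [Real.rpow_one]

lemma tail_right {s c t b : ℝ} (hs : 0 < s) (ht : 0 ≤ t) (htc : t < c) (hb : 0 ≤ b) :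
    ∫ x in Ioi b, x ^ (s-1) * Real.exp (-(c*x))
      ≤ Real.exp (-(t*b)) * ((1/(c-t)) ^ s * Real.Gamma s) := by
  have hct : 0 < c - t := by linarith
  have hc : 0 < c := lt_of_le_of_lt ht htc
  have hint2 : IntegrableOn (fun x : ℝ => Real.exp (-(t*b)) * (x ^ (s-1) * Real.exp (-((c-t)*x)))) (Ioi 0) :=
    (integrableOn_g hs hct).const_mul _
  have step1 : ∫ x in Ioi b, x ^ (s-1) * Real.exp (-(c*x))
      ≤ ∫ x in Ioi b, Real.exp (-(t*b)) * (x ^ (s-1) * Real.exp (-((c-t)*x))) := by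
    apply setIntegral_mono_on
    · exact (integrableOn_g hs hc).mono_set (Ioi_subset_Ioi hb)
    · exact hint2.mono_set (Ioi_subset_Ioi hb)
    · exact measurableSet_Ioi
    · intro x hx
      have hxb : b ≤ x := le_of_lt hx
      have h0x : 0 < x := lt_of_le_of_lt hb hx
      have : Real.exp (-(c*x)) ≤ Real.exp (-(t*b)) * Real.exp (-((c-t)*x)) := by
        rw [← Real.exp_add, Real.exp_le_exp]
        nlinarith
      calc x ^ (s-1) * Real.exp (-(c*x)) ≤ x ^ (s-1) * (Real.exp (-(t*b)) * Real.exp (-((c-t)*x))) :=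
            mul_le_mul_of_nonneg_left this (by positivity)
        _ = Real.exp (-(t*b)) * (x ^ (s-1) * Real.exp (-((c-t)*x))) := by ring
  have step2 : ∫ x in Ioi b, Real.exp (-(t*b)) * (x ^ (s-1) * Real.exp (-((c-t)*x)))
      ≤ ∫ x in Ioi 0, Real.exp (-(t*b)) * (x ^ (s-1) * Real.exp (-((c-t)*x))) := by
    apply setIntegral_mono_set hint2
    · filter_upwards [self_mem_ae_restrict measurableSet_Ioi] with x hx
      have : (0:ℝ) < x := hx
      positivity
    · exact HasSubset.Subset.eventuallyLE (Ioi_subset_Ioi hb)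
  have step3 : ∫ x in Ioi 0, Real.exp (-(t*b)) * (x ^ (s-1) * Real.exp (-((c-t)*x)))
      = Real.exp (-(t*b)) * ((1/(c-t)) ^ s * Real.Gamma s) := by
    rw [integral_const_mul]
    congr 1
    exact Real.integral_rpow_mul_exp_neg_mul_Ioi hs hct
  linarith

lemma tail_left {s c t b : ℝ} (hs : 0 < s) (hc : 0 < c) (ht : 0 ≤ t) (hb : 0 ≤ b) :
    ∫ x in Ioc 0 b, x ^ (s-1) * Real.exp (-(c*x))
      ≤ Real.exp (t*b) * ((1/(c+t)) ^ s * Real.Gamma s) := by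
  have hct : 0 < c + t := by linarith
  have hint2 : IntegrableOn (fun x : ℝ => Real.exp (t*b) * (x ^ (s-1) * Real.exp (-((c+t)*x)))) (Ioi 0) :=
    (integrableOn_g hs hct).const_mul _
  have step1 : ∫ x in Ioc 0 b, x ^ (s-1) * Real.exp (-(c*x))
      ≤ ∫ x in Ioc 0 b, Real.exp (t*b) * (x ^ (s-1) * Real.exp (-((c+t)*x))) := by
    apply setIntegral_mono_on
    · exact (integrableOn_g hs hc).mono_set Ioc_subset_Ioi_self
    · exact hint2.mono_set Ioc_subset_Ioi_self
    · exact measurableSet_Ioc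
    · intro x hx
      have h0x : 0 < x := hx.1
      have : Real.exp (-(c*x)) ≤ Real.exp (t*b) * Real.exp (-((c+t)*x)) := by
        rw [← Real.exp_add, Real.exp_le_exp]
        nlinarith [hx.2]
      calc x ^ (s-1) * Real.exp (-(c*x)) ≤ x ^ (s-1) * (Real.exp (t*b) * Real.exp (-((c+t)*x))) :=
            mul_le_mul_of_nonneg_left this (by positivity)
        _ = Real.exp (t*b) * (x ^ (s-1) * Real.exp (-((c+t)*x))) := by ring
  have step2 : ∫ x in Ioc 0 b, Real.exp (t*b) * (x ^ (s-1) * Real.exp (-((c+t)*x)))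
      ≤ ∫ x in Ioi 0, Real.exp (t*b) * (x ^ (s-1) * Real.exp (-((c+t)*x))) := by
    apply setIntegral_mono_set hint2
    · filter_upwards [self_mem_ae_restrict measurableSet_Ioi] with x hx
      have : (0:ℝ) < x := hx
      positivity
    · exact HasSubset.Subset.eventuallyLE Ioc_subset_Ioi_self
  have step3 : ∫ x in Ioi 0, Real.exp (t*b) * (x ^ (s-1) * Real.exp (-((c+t)*x)))
      = Real.exp (t*b) * ((1/(c+t)) ^ s * Real.Gamma s) := by
    rw [integral_const_mul]
    congr 1
    exact Real.integral_rpow_mul_exp_neg_mul_Ioi hs hct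
  linarith


lemma log_one_sub_bound {u : ℝ} (h0 : 0 ≤ u) (h1 : u ≤ 1/4) :
    -Real.log (1-u) ≤ u + (4/3)*u^2 := by
  have hu1 : (0:ℝ) < 1 - u := by linarith
  have key : (1:ℝ)/(1-u) ≤ Real.exp (u/(1-u)) := by
    have := Real.add_one_le_exp (u/(1-u))
    have heq : u/(1-u) + 1 = 1/(1-u) := by field_simp; ring
    linarith
  have hlog : Real.log (1/(1-u)) ≤ u/(1-u) := by
    rw [Real.log_le_iff_le_exp (by positivity)]
    exact key
  have hlog2 : -Real.log (1-u) = Real.log (1/(1-u)) := by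
    rw [one_div, Real.log_inv]
  have hfrac : u/(1-u) ≤ u + (4/3)*u^2 := by
    rw [div_le_iff₀ hu1]
    nlinarith
  linarith

lemma log_one_add_bound {w : ℝ} (h0 : 0 ≤ w) : w - w^2 ≤ Real.log (1+w) := by
  have h1w : (0:ℝ) < 1 + w := by linarith
  have key : Real.exp (w - w^2) ≤ 1 + w := by
    have h2 := Real.add_one_le_exp (w^2 - w)
    have hE : 0 < Real.exp (w^2 - w) := Real.exp_pos _
    have h3 : 1 ≤ (1+w) * Real.exp (w^2 - w) := by nlinarith
    have h4 : Real.exp (w - w^2) = (Real.exp (w^2 - w))⁻¹ := by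
      rw [← Real.exp_neg]; ring_nf
    rw [h4, inv_le_iff_one_le_mul₀ hE]
    linarith [h3]
  exact (Real.le_log_iff_exp_le h1w).mpr key

lemma normal_tail_bound {z : ℝ} (hz : 0 ≤ z) :
    ∫ y in Iio (-z) ∪ Ioi z, stdPhi y ≤ 4 * Real.exp (-(z^2/4)) := by
  have hInt : Integrable (fun y : ℝ => Real.exp (-(z^2/4)) * Real.exp (-(4⁻¹) * y^2)) := by
    exact (integrable_exp_neg_mul_sq (by norm_num)).const_mul _
  have hmeas : MeasurableSet (Iio (-z) ∪ Ioi z) := (measurableSet_Iio).union measurableSet_Ioi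
  have step1 : ∫ y in Iio (-z) ∪ Ioi z, stdPhi y
      ≤ ∫ y in Iio (-z) ∪ Ioi z, Real.exp (-(z^2/4)) * Real.exp (-(4⁻¹) * y^2) := by
    apply setIntegral_mono_on
    · have h := (integrable_exp_neg_mul_sq (by norm_num : (0:ℝ) < 1/2)).div_const
        (Real.sqrt (2*Real.pi))
      have h2 : Integrable stdPhi := by
        apply h.congr
        filter_upwards with y
        rw [stdPhi]
        congr 2
        ring
      exact h2.integrableOn
    · exact hInt.integrableOn
    · exact hmeas
    · intro y hy
      have hy2 : z^2 ≤ y^2 := by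
        rcases hy with hy | hy
        · simp only [mem_Iio] at hy; nlinarith
        · simp only [mem_Ioi] at hy; nlinarith
      have hsq : Real.sqrt (2*Real.pi) ≥ 1 := by
        rw [show (1:ℝ) = Real.sqrt 1 by simp]
        apply Real.sqrt_le_sqrt
        nlinarith [Real.pi_gt_three]
      have hexp : Real.exp (-y^2/2) ≤ Real.exp (-(z^2/4)) * Real.exp (-(4⁻¹)*y^2) := by
        rw [← Real.exp_add, Real.exp_le_exp]
        nlinarith
      calc stdPhi y ≤ Real.exp (-y^2/2) := by
            rw [stdPhi, div_le_iff₀ (by positivity)]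
            nlinarith [Real.exp_pos (-y^2/2)]
        _ ≤ _ := hexp
  have step2 : ∫ y in Iio (-z) ∪ Ioi z, Real.exp (-(z^2/4)) * Real.exp (-(4⁻¹) * y^2)
      ≤ ∫ y : ℝ, Real.exp (-(z^2/4)) * Real.exp (-(4⁻¹) * y^2) := by
    apply setIntegral_le_integral hInt
    filter_upwards with y
    positivity
  have step3 : ∫ y : ℝ, Real.exp (-(z^2/4)) * Real.exp (-(4⁻¹) * y^2)
      = Real.exp (-(z^2/4)) * Real.sqrt (Real.pi / 4⁻¹) := by
    rw [integral_const_mul, integral_gaussian]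
  have step4 : Real.exp (-(z^2/4)) * Real.sqrt (Real.pi / 4⁻¹) ≤ 4 * Real.exp (-(z^2/4)) := by
    have : Real.sqrt (Real.pi / 4⁻¹) ≤ 4 := by
      have h16 : Real.sqrt (Real.pi/4⁻¹) ≤ Real.sqrt 16 :=
        Real.sqrt_le_sqrt (by rw [div_inv_eq_mul]; nlinarith [Real.pi_lt_d2])
      have h4 : Real.sqrt 16 = 4 := by
        rw [show (16:ℝ) = 4^2 by norm_num, Real.sqrt_sq (by norm_num : (0:ℝ) ≤ 4)]
      linarith
    nlinarith [Real.exp_pos (-(z^2/4))]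
  linarith

lemma div_div_same_cancel {A B S : ℝ} (hS : S ≠ 0) (hB : B ≠ 0) : (A/S)/(B/S) = A/B := by
  field_simp


set_option maxHeartbeats 1000000 in
/-- Large deviation bounds for the noncentral chi-square density and the standard
normal density outside the bulk `B_{r,λ}(1/2)`. -/
theorem chiSq_large_deviation_bounds (lam : ℝ) (hlam : 0 ≤ lam) :
    ∃ β > (0:ℝ), ∃ C > (0:ℝ), ∃ R > (0:ℝ), ∀ r ≥ R, ∀ a : ℝ,
      (∫ x in Set.Ici a ∩ (Set.Ioi 0 \ bulk r lam (1/2)), chiSqPDF r lam x)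
        ≤ C * Real.exp (-β * r ^ ((1:ℝ)/3)) ∧
      (∫ y in stdDelta r lam '' (Set.Ici a ∩ (Set.Ioi 0 \ bulk r lam (1/2))), stdPhi y)
        ≤ C * Real.exp (-β * r ^ ((1:ℝ)/3)) := by
  refine ⟨1/96, by norm_num, 2 * Real.exp (lam^2 + lam) + 4, by positivity,
    (8*lam + 14000)^3, by positivity, fun r hrR a => ?_⟩
  -- basic facts
  have hbase : (14000:ℝ)^3 ≤ r := by
    have : (14000:ℝ)^3 ≤ (8*lam+14000)^3 := by
      apply pow_le_pow_left₀ (by norm_num) (by linarith)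
    linarith
  have hrpos : (0:ℝ) < r := by nlinarith
  have hr1 : (1:ℝ) ≤ r := by nlinarith
  obtain ⟨q, hqdef⟩ : ∃ X : ℝ, X = r ^ ((1:ℝ)/3) := ⟨_, rfl⟩
  have hq0 : 0 < q := by rw [hqdef]; positivity
  have hq3 : q^3 = r := by
    rw [hqdef, ← Real.rpow_natCast (r ^ ((1:ℝ)/3)) 3, ← Real.rpow_mul hrpos.le]
    norm_num
  have hq14 : 8*lam + 14000 ≤ q := by
    have h1 : ((8*lam+14000)^3 : ℝ) ^ ((1:ℝ)/3) ≤ r ^ ((1:ℝ)/3) :=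
      Real.rpow_le_rpow (by positivity) hrR (by norm_num)
    have h2 : ((8*lam+14000)^3 : ℝ) ^ ((1:ℝ)/3) = 8*lam+14000 := by
      rw [← Real.rpow_natCast (8*lam+14000) 3, ← Real.rpow_mul (by positivity)]
      norm_num
    rw [h2] at h1
    rw [hqdef]
    exact h1
  have hq14' : (14000:ℝ) ≤ q := by linarith
  obtain ⟨ε, hεdef⟩ : ∃ X : ℝ, X = 1/(2*q) := ⟨_, rfl⟩
  have hε0 : 0 < ε := by rw [hεdef]; positivity
  have hε14 : ε ≤ 1/4 := by
    rw [hεdef, div_le_div_iff₀ (by positivity) (by norm_num)]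
    linarith
  have hεr : ε * r = q^2/2 := by
    rw [hεdef, ← hq3]; field_simp
  have hε2r : ε^2 * r = q/4 := by
    rw [hεdef, ← hq3]; field_simp; ring
  have hlamr : lam / r ≤ ε/4 := by
    rw [div_le_div_iff₀ hrpos (by norm_num)]
    have h8 : 8*lam ≤ q := by linarith
    nlinarith [hεr, hq0]
  have hlamr0 : 0 ≤ lam / r := by positivity
  have hlamler : lam ≤ r := by nlinarith
  obtain ⟨m, hmdef⟩ : ∃ X : ℝ, X = r + lam := ⟨_, rfl⟩
  have hm0 : 0 < m := by rw [hmdef]; positivity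
  obtain ⟨bR, hbRdef⟩ : ∃ X : ℝ, X = m * (1+ε) := ⟨_, rfl⟩
  obtain ⟨bL, hbLdef⟩ : ∃ X : ℝ, X = m * (1-ε) := ⟨_, rfl⟩
  have hbL0 : 0 ≤ bL := by rw [hbLdef]; nlinarith
  have hbR0 : 0 ≤ bR := by rw [hbRdef]; nlinarith
  have hbLR : bL ≤ bR := by rw [hbLdef, hbRdef]; nlinarith
  obtain ⟨s, hsdef⟩ : ∃ X : ℝ, X = r/2 := ⟨_, rfl⟩
  have hs0 : 0 < s := by rw [hsdef]; positivity
  obtain ⟨c, hcdef⟩ : ∃ X : ℝ, X = 1/2 - lam/(2*r) := ⟨_, rfl⟩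
  have hc0 : 0 < c := by
    rw [hcdef]
    have : lam/(2*r) = (lam/r)/2 := by ring
    rw [this]
    linarith
  obtain ⟨t, htdef⟩ : ∃ X : ℝ, X = ε/4 := ⟨_, rfl⟩
  have ht0 : 0 ≤ t := by rw [htdef]; positivity
  have htc : t < c := by
    rw [htdef, hcdef]
    have : lam/(2*r) = (lam/r)/2 := by ring
    rw [this]
    linarith
  -- bulk threshold
  have hthr : (1/2 : ℝ) * r ^ (-(1:ℝ)/3) = ε := by
    rw [show (-(1:ℝ)/3) = -((1:ℝ)/3) by norm_num, Real.rpow_neg hrpos.le, hεdef, ← hqdef]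
    field_simp
  have hsqrt0 : (0:ℝ) < Real.sqrt (2*(r+2*lam)) := by positivity
  have hDrl0 : 0 < Drl r lam := by
    rw [Drl]; positivity
  -- subset property
  have hSsub : (Set.Ici a ∩ (Set.Ioi 0 \ bulk r lam (1/2))) ⊆ Ioc 0 bL ∪ Ioi bR := by
    rintro x ⟨hxa, hx0, hxnb⟩
    have hx0' : (0:ℝ) < x := hx0
    have hquot : stdDelta r lam x / Drl r lam = (x - m)/m := by
      rw [hmdef, stdDelta, Drl]
      exact div_div_same_cancel hsqrt0.ne' (by positivity)
    have hgt : ε < |stdDelta r lam x / Drl r lam| := by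
      by_contra hle
      push_neg at hle
      exact hxnb ⟨hx0', by rw [hthr]; exact hle⟩
    rw [hquot, abs_div, abs_of_pos hm0, lt_div_iff₀ hm0] at hgt
    rcases lt_abs.mp hgt with h | h
    · right
      rw [mem_Ioi, hbRdef, show m*(1+ε) = m + ε*m by ring]
      linarith
    · left
      rw [mem_Ioc]
      refine ⟨hx0', ?_⟩
      rw [hbLdef, show m*(1-ε) = m - ε*m by ring]
      linarith
  -- measurability
  have hbulkm : MeasurableSet (bulk r lam (1/2)) := by
    have heq : bulk r lam (1/2) = {x : ℝ | 0 < x} ∩ {x : ℝ | |stdDelta r lam x / Drl r lam| ≤ 1/2 * r ^ (-(1:ℝ)/3)} := by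
      rw [bulk, Set.setOf_and]
    rw [heq]
    refine MeasurableSet.inter measurableSet_Ioi ?_
    have hcont : Continuous fun x : ℝ => |stdDelta r lam x / Drl r lam| := by
      apply Continuous.abs
      apply Continuous.div_const
      show Continuous fun x : ℝ => (x - (r+lam))/Real.sqrt (2*(r+2*lam))
      exact (continuous_id.sub continuous_const).div_const _
    exact measurableSet_le hcont.measurable measurable_const
  have hSm : MeasurableSet (Set.Ici a ∩ (Set.Ioi 0 \ bulk r lam (1/2))) :=
    measurableSet_Ici.inter (measurableSet_Ioi.diff hbulkm)
  have hSIoi : (Set.Ici a ∩ (Set.Ioi 0 \ bulk r lam (1/2))) ⊆ Ioi 0 := fun x hx => hx.2.1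
  -- exponent quantities
  obtain ⟨w, hwdef⟩ : ∃ X : ℝ, X = ε/2 - lam/r := ⟨_, rfl⟩
  obtain ⟨u, hudef⟩ : ∃ X : ℝ, X = lam/r + ε/2 := ⟨_, rfl⟩
  have hw0 : 0 ≤ w := by rw [hwdef]; linarith
  have hwε : w ≤ ε/2 := by rw [hwdef]; linarith
  have hu0 : 0 ≤ u := by rw [hudef]; linarith
  have hu14 : u ≤ 1/4 := by rw [hudef]; linarith
  have h2ct : 2*(c+t) = 1 + w := by
    rw [hcdef, htdef, hwdef]; field_simp; ring
  have h2ct' : 2*(c-t) = 1 - u := by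
    rw [hcdef, htdef, hudef]; field_simp; ring
  have h1w : (0:ℝ) < 1 + w := by linarith
  have h1u : (0:ℝ) < 1 - u := by linarith
  -- exponent identities
  have hsw : s * w = ε*r/4 - lam/2 := by
    rw [hsdef, hwdef]; field_simp; ring
  have hsu : s * u = lam/2 + ε*r/4 := by
    rw [hsdef, hudef]; field_simp; ring
  have hsu2 : s * ((4/3)*u^2) = 2*lam^2/(3*r) + 2*lam*ε/3 + ε^2*r/6 := by
    rw [hsdef, hudef]; field_simp; ring
  have hsw2 : s * w^2 ≤ ε^2*r/8 := by
    have hw2 : w^2 ≤ (ε/2)^2 := pow_le_pow_left₀ hw0 hwε 2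
    calc s * w^2 ≤ s * (ε/2)^2 := mul_le_mul_of_nonneg_left hw2 hs0.le
      _ = ε^2*r/8 := by rw [hsdef]; ring
  have hεlam : ε*lam ≤ lam := mul_le_of_le_one_left hlam (by linarith)
  have hεlam0 : 0 ≤ ε*lam := mul_nonneg hε0.le hlam
  have hε2lam0 : 0 ≤ ε^2*lam := by positivity
  have htbL : t * bL ≤ ε*r/4 + lam/4 - ε^2*r/4 := by
    have e1 : t * bL = ε*r/4 + (ε*lam)/4 - ε^2*r/4 - (ε^2*lam)/4 := by
      rw [htdef, hbLdef, hmdef]; ring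
    linarith
  have htbR : ε*r/4 + ε^2*r/4 ≤ t * bR := by
    have e1 : t * bR = ε*r/4 + (ε*lam)/4 + ε^2*r/4 + (ε^2*lam)/4 := by
      rw [htdef, hbRdef, hmdef]; ring
    linarith
  have hlam2r : lam^2/r ≤ lam^2 := div_le_self (by positivity) hr1
  -- left tail exponent bound
  have hEL : -(lam/2) + (t*bL + -Real.log (1+w) * s)
      ≤ lam^2 + lam - q/96 := by
    have hlog := log_one_add_bound hw0
    have h1 : -Real.log (1+w) * s ≤ -(w - w^2) * s :=
      mul_le_mul_of_nonneg_right (neg_le_neg hlog) hs0.le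
    have h2 : -(w - w^2) * s = -(s*w) + s*w^2 := by ring
    rw [h2] at h1
    linarith [hsw2, htbL, sq_nonneg lam, hq0.le, hsw, hε2r]
  -- right tail exponent bound
  have hER : -(lam/2) + (-(t*bR) + -Real.log (1-u) * s)
      ≤ lam^2 + lam - q/96 := by
    have hlog := log_one_sub_bound hu0 hu14
    have h1 : -Real.log (1-u) * s ≤ (u + (4/3)*u^2) * s :=
      mul_le_mul_of_nonneg_right hlog hs0.le
    have h2 : (u + (4/3)*u^2) * s = s*u + s*((4/3)*u^2) := by ring
    rw [h2, hsu, hsu2] at h1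
    have h5 : lam*ε ≤ lam*(1/4) := mul_le_mul_of_nonneg_left hε14 hlam
    have h6 : 2*lam^2/(3*r) = (2/3)*(lam^2/r) := by ring
    have h7 : 2*lam*ε/3 = (2/3)*(lam*ε) := by ring
    linarith [htbR, sq_nonneg lam, hq0.le, hε2r, hlam2r]
  constructor
  · -- chi-square part
    by_cases hI : IntegrableOn (fun x => chiSqPDF r lam x)
        (Set.Ici a ∩ (Set.Ioi 0 \ bulk r lam (1/2))) volume
    · obtain ⟨K, hKdef⟩ : ∃ X : ℝ, X = Real.exp (-(lam/2)) / (2 ^ (r/2) * Real.Gamma (r/2)) := ⟨_, rfl⟩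
      have hG0 : 0 < Real.Gamma (r/2) := Real.Gamma_pos_of_pos (by linarith)
      have hK0 : 0 ≤ K := by rw [hKdef]; positivity
      have hgK_int : IntegrableOn (fun x => x ^ (s-1) * Real.exp (-(c*x)) * K) (Ioi 0) :=
        (integrableOn_g hs0 hc0).mul_const _
      have step1 : (∫ x in Set.Ici a ∩ (Set.Ioi 0 \ bulk r lam (1/2)), chiSqPDF r lam x)
          ≤ ∫ x in Set.Ici a ∩ (Set.Ioi 0 \ bulk r lam (1/2)), x ^ (s-1) * Real.exp (-(c*x)) * K := by
        apply setIntegral_mono_on hI (hgK_int.mono_set hSIoi) hSm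
        intro x hx
        have hx0 : 0 < x := hSIoi hx
        have h := pdf_le hrpos hlam hx0
        rw [hsdef, hcdef, hKdef]
        exact h
      have step2 : (∫ x in Set.Ici a ∩ (Set.Ioi 0 \ bulk r lam (1/2)), x ^ (s-1) * Real.exp (-(c*x)) * K)
          ≤ ∫ x in Ioc 0 bL ∪ Ioi bR, x ^ (s-1) * Real.exp (-(c*x)) * K := by
        apply setIntegral_mono_set
        · apply hgK_int.mono_set
          intro x hx
          rcases hx with h | h
          · exact h.1
          · exact lt_of_le_of_lt hbR0 h
        · filter_upwards [self_mem_ae_restrict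
            ((measurableSet_Ioc.union measurableSet_Ioi))] with x hx
          have hx0 : 0 < x := by
            rcases hx with h | h
            · exact h.1
            · exact lt_of_le_of_lt hbR0 h
          positivity
        · exact HasSubset.Subset.eventuallyLE hSsub
      have hdisj : Disjoint (Ioc (0:ℝ) bL) (Ioi bR) :=
        Ioc_disjoint_Ioi hbLR
      have hintL : IntegrableOn (fun x => x ^ (s-1) * Real.exp (-(c*x)) * K) (Ioc 0 bL) :=
        hgK_int.mono_set Ioc_subset_Ioi_self
      have hintR : IntegrableOn (fun x => x ^ (s-1) * Real.exp (-(c*x)) * K) (Ioi bR) :=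
        hgK_int.mono_set (fun x hx => lt_of_le_of_lt hbR0 hx)
      have step3 : (∫ x in Ioc 0 bL ∪ Ioi bR, x ^ (s-1) * Real.exp (-(c*x)) * K)
          = (∫ x in Ioc 0 bL, x ^ (s-1) * Real.exp (-(c*x)) * K) + ∫ x in Ioi bR, x ^ (s-1) * Real.exp (-(c*x)) * K :=
        MeasureTheory.setIntegral_union hdisj measurableSet_Ioi hintL hintR
      -- evaluate the two tails
      have htailL : (∫ x in Ioc 0 bL, x ^ (s-1) * Real.exp (-(c*x)) * K)
          ≤ Real.exp (t*bL) * ((1/(c+t)) ^ s * Real.Gamma s) * K := by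
        rw [integral_mul_const]
        exact mul_le_mul_of_nonneg_right (tail_left hs0 hc0 ht0 hbL0) hK0
      have htailR : (∫ x in Ioi bR, x ^ (s-1) * Real.exp (-(c*x)) * K)
          ≤ Real.exp (-(t*bR)) * ((1/(c-t)) ^ s * Real.Gamma s) * K := by
        rw [integral_mul_const]
        exact mul_le_mul_of_nonneg_right (tail_right hs0 ht0 htc hbR0) hK0
      -- rewrite tails as single exponentials
      have hKG : Real.Gamma s * K = Real.exp (-(lam/2)) * (1/2 : ℝ) ^ s := by
        rw [hKdef, hsdef]
        rw [Real.div_rpow (by norm_num) (by norm_num), Real.one_rpow]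
        field_simp
      have hvalL : Real.exp (t*bL) * ((1/(c+t)) ^ s * Real.Gamma s) * K
          = Real.exp (-(lam/2) + (t*bL + -Real.log (1+w) * s)) := by
        have hct0' : (0:ℝ) < c + t := by linarith
        have h1 : ((1:ℝ)/(c+t)) ^ s * (1/2 : ℝ) ^ s = (1/(1+w)) ^ s := by
          rw [← Real.mul_rpow (one_div_pos.mpr hct0').le (by norm_num)]
          congr 1
          rw [← h2ct]
          field_simp
        have h2 : ((1:ℝ)/(1+w)) ^ s = Real.exp (-Real.log (1+w) * s) := by
          rw [Real.rpow_def_of_pos (one_div_pos.mpr h1w), one_div, Real.log_inv]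
        calc Real.exp (t*bL) * ((1/(c+t)) ^ s * Real.Gamma s) * K
            = Real.exp (t*bL) * Real.exp (-(lam/2)) * ((1/(c+t)) ^ s * (1/2:ℝ) ^ s) := by
              linear_combination Real.exp (t*bL) * ((1:ℝ)/(c+t)) ^ s * hKG
          _ = Real.exp (t*bL) * Real.exp (-(lam/2)) * Real.exp (-Real.log (1+w) * s) := by
              rw [h1, h2]
          _ = Real.exp (-(lam/2) + (t*bL + -Real.log (1+w) * s)) := by
              rw [← Real.exp_add, ← Real.exp_add]; ring_nf
      have hvalR : Real.exp (-(t*bR)) * ((1/(c-t)) ^ s * Real.Gamma s) * K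
          = Real.exp (-(lam/2) + (-(t*bR) + -Real.log (1-u) * s)) := by
        have hct0 : (0:ℝ) < c - t := sub_pos.mpr htc
        have h1 : ((1:ℝ)/(c-t)) ^ s * (1/2 : ℝ) ^ s = (1/(1-u)) ^ s := by
          rw [← Real.mul_rpow (one_div_pos.mpr hct0).le (by norm_num)]
          congr 1
          rw [← h2ct']
          field_simp
        have h2 : ((1:ℝ)/(1-u)) ^ s = Real.exp (-Real.log (1-u) * s) := by
          rw [Real.rpow_def_of_pos (one_div_pos.mpr h1u), one_div, Real.log_inv]
        calc Real.exp (-(t*bR)) * ((1/(c-t)) ^ s * Real.Gamma s) * K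
            = Real.exp (-(t*bR)) * Real.exp (-(lam/2)) * ((1/(c-t)) ^ s * (1/2:ℝ) ^ s) := by
              linear_combination Real.exp (-(t*bR)) * ((1:ℝ)/(c-t)) ^ s * hKG
          _ = Real.exp (-(t*bR)) * Real.exp (-(lam/2)) * Real.exp (-Real.log (1-u) * s) := by
              rw [h1, h2]
          _ = Real.exp (-(lam/2) + (-(t*bR) + -Real.log (1-u) * s)) := by
              rw [← Real.exp_add, ← Real.exp_add]; ring_nf
      have hfinL : Real.exp (-(lam/2) + (t*bL + -Real.log (1+w) * s))
          ≤ Real.exp (lam^2+lam) * Real.exp (-(1/96)*q) := by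
        rw [← Real.exp_add, Real.exp_le_exp]
        linarith [hEL]
      have hfinR : Real.exp (-(lam/2) + (-(t*bR) + -Real.log (1-u) * s))
          ≤ Real.exp (lam^2+lam) * Real.exp (-(1/96)*q) := by
        rw [← Real.exp_add, Real.exp_le_exp]
        linarith [hER]
      have hfinal : (∫ x in Set.Ici a ∩ (Set.Ioi 0 \ bulk r lam (1/2)), chiSqPDF r lam x)
          ≤ 2 * Real.exp (lam^2+lam) * Real.exp (-(1/96)*q) := by
        calc (∫ x in Set.Ici a ∩ (Set.Ioi 0 \ bulk r lam (1/2)), chiSqPDF r lam x)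
            ≤ (∫ x in Ioc 0 bL, x ^ (s-1) * Real.exp (-(c*x)) * K) + ∫ x in Ioi bR, x ^ (s-1) * Real.exp (-(c*x)) * K := by
              rw [← step3]; linarith
          _ ≤ Real.exp (lam^2+lam) * Real.exp (-(1/96)*q)
              + Real.exp (lam^2+lam) * Real.exp (-(1/96)*q) := by
              rw [hvalL] at htailL
              rw [hvalR] at htailR
              linarith
          _ = 2 * Real.exp (lam^2+lam) * Real.exp (-(1/96)*q) := by ring
      calc (∫ x in Set.Ici a ∩ (Set.Ioi 0 \ bulk r lam (1/2)), chiSqPDF r lam x)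
          ≤ 2 * Real.exp (lam^2+lam) * Real.exp (-(1/96)*q) := hfinal
        _ ≤ (2 * Real.exp (lam^2 + lam) + 4) * Real.exp (-(1/96) * r ^ ((1:ℝ)/3)) := by
            rw [← hqdef]
            exact mul_le_mul_of_nonneg_right
              (by linarith : 2 * Real.exp (lam^2+lam) ≤ 2 * Real.exp (lam^2+lam) + 4)
              (Real.exp_pos (-(1/96)*q)).le
    · rw [integral_undef hI]
      positivity
  · -- normal part
    obtain ⟨z, hzdef⟩ : ∃ X : ℝ, X = ε * Drl r lam := ⟨_, rfl⟩
    have hz0 : 0 ≤ z := by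
      rw [hzdef]; positivity
    have hphi_int : Integrable stdPhi := by
      have h := (integrable_exp_neg_mul_sq (by norm_num : (0:ℝ) < 1/2)).div_const
        (Real.sqrt (2*Real.pi))
      apply h.congr
      filter_upwards with y
      rw [stdPhi]
      congr 2
      ring
    have himg : stdDelta r lam '' (Set.Ici a ∩ (Set.Ioi 0 \ bulk r lam (1/2)))
        ⊆ Iio (-z) ∪ Ioi z := by
      rintro y ⟨x, ⟨hxa, hx0, hxnb⟩, rfl⟩
      have hx0' : (0:ℝ) < x := hx0
      have hgt : ε < |stdDelta r lam x / Drl r lam| := by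
        by_contra hle
        push_neg at hle
        exact hxnb ⟨hx0', by rw [hthr]; exact hle⟩
      rw [abs_div, abs_of_pos hDrl0, lt_div_iff₀ hDrl0] at hgt
      rcases lt_abs.mp hgt with h | h
      · right
        rw [mem_Ioi, hzdef]
        linarith
      · left
        rw [mem_Iio, hzdef]
        linarith
    have step1 : (∫ y in stdDelta r lam '' (Set.Ici a ∩ (Set.Ioi 0 \ bulk r lam (1/2))), stdPhi y)
        ≤ ∫ y in Iio (-z) ∪ Ioi z, stdPhi y := by
      apply setIntegral_mono_set hphi_int.integrableOn
      · filter_upwards with y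
        rw [stdPhi]
        positivity
      · exact HasSubset.Subset.eventuallyLE himg
    have step2 := normal_tail_bound hz0
    have hz2 : q/24 ≤ z^2 := by
      have hD2 : (Drl r lam)^2 = m^2 / (2*(r+2*lam)) := by
        rw [Drl, div_pow, Real.sq_sqrt (by positivity), hmdef]
      have hD2' : r/6 ≤ (Drl r lam)^2 := by
        rw [hD2]
        rw [div_le_div_iff₀ (by norm_num) (by positivity)]
        have e1 : m^2*6 - r*(2*(r+2*lam)) = 4*r^2 + 8*(r*lam) + 6*lam^2 := by
          rw [hmdef]; ring
        have e2 : 0 ≤ r*lam := mul_nonneg hrpos.le hlam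
        linarith [sq_nonneg r, sq_nonneg lam]
      have : z^2 = ε^2 * (Drl r lam)^2 := by rw [hzdef]; ring
      rw [this]
      calc q/24 = (ε^2*r)/6 := by rw [hε2r]; ring
        _ = ε^2 * (r/6) := by ring
        _ ≤ ε^2 * (Drl r lam)^2 := mul_le_mul_of_nonneg_left hD2' (sq_nonneg ε)
    have step3 : (4:ℝ) * Real.exp (-(z^2/4)) ≤ (2 * Real.exp (lam^2 + lam) + 4) * Real.exp (-(1/96) * r ^ ((1:ℝ)/3)) := by
      rw [← hqdef]
      have h1 : Real.exp (-(z^2/4)) ≤ Real.exp (-(1/96)*q) := by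
        rw [Real.exp_le_exp]
        linarith
      have h2 : (0:ℝ) < Real.exp (lam^2+lam) := Real.exp_pos _
      calc (4:ℝ) * Real.exp (-(z^2/4)) ≤ 4 * Real.exp (-(1/96)*q) :=
            mul_le_mul_of_nonneg_left h1 (by norm_num)
        _ ≤ (2 * Real.exp (lam^2 + lam) + 4) * Real.exp (-(1/96)*q) :=
            mul_le_mul_of_nonneg_right (by linarith) (Real.exp_pos _).le
    linarith
end
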